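/- arXiv:0705.1835 — 4 statements merged into one kernel-verified Lean document; each statement's English description precedes it below -/
import Mathlib

section
/- If a triangulation of a closed surface contains two adjacent vertices each of valence 3, then the triangulation is the boundary of the tetrahedron (it has exactly 4 vertices and 4 triangles). -/
namespace Tri

/-- A (pure 2-dimensional) simplicial complex, given by its set of triangles
(each triangle is a 3-element finset of vertex labels). -/
abbrev Complex := Finset (Finset ℕ)

/-- The vertices of a complex. -/
def vertices (K : Complex) : Finset ℕ := K.biUnion id

/-- The edges of a complex: 2-element subsets of triangles. -/
def edges (K : Complex) : Finset (Finset ℕ) := K.biUnion fun t => t.powersetCard 2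

/-- The valence of a vertex: the number of triangles containing it. -/
def valence (K : Complex) (v : ℕ) : ℕ := (K.filter (fun t => v ∈ t)).card

/-- The maximal vertex-valence of a complex. -/
def mv (K : Complex) : ℕ := (vertices K).sup (valence K)

/-- Euler characteristic V - E + T. -/
def eulerChar (K : Complex) : ℤ :=
  ((vertices K).card : ℤ) - (edges K).card + K.card

/-- Two triangles of `K` both containing `v` and sharing an edge. -/
def adjAt (K : Complex) (v : ℕ) (t₁ t₂ : Finset ℕ) : Prop :=
  t₁ ∈ K ∧ t₂ ∈ K ∧ v ∈ t₁ ∧ v ∈ t₂ ∧ (t₁ ∩ t₂).card = 2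

/-- Two triangles of `K` sharing an edge. -/
def adj (K : Complex) (t₁ t₂ : Finset ℕ) : Prop :=
  t₁ ∈ K ∧ t₂ ∈ K ∧ (t₁ ∩ t₂).card = 2

/-- A triangulation of a connected compact surface, possibly with boundary:
every triangle has 3 vertices, every edge lies in at most two triangles,
the triangles around every vertex are connected via edges through that vertex
(so every vertex link is a path or a circle), and the complex is connected. -/
structure IsSurface (K : Complex) : Prop where
  nonempty : K.Nonempty
  card3 : ∀ t ∈ K, t.card = 3
  edge_le : ∀ e ∈ edges K, (K.filter (fun t => e ⊆ t)).card ≤ 2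
  link_conn : ∀ v, ∀ t₁ ∈ K, ∀ t₂ ∈ K, v ∈ t₁ → v ∈ t₂ →
    Relation.ReflTransGen (adjAt K v) t₁ t₂
  conn : ∀ t₁ ∈ K, ∀ t₂ ∈ K, Relation.ReflTransGen (adj K) t₁ t₂

/-- A triangulation of a closed (connected compact) surface: every edge lies
in exactly two triangles. -/
def IsClosedSurface (K : Complex) : Prop :=
  IsSurface K ∧ ∀ e ∈ edges K, (K.filter (fun t => e ⊆ t)).card = 2

/-- Boundary edges: edges lying in exactly one triangle. -/
def bdryEdges (K : Complex) : Finset (Finset ℕ) :=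
  (edges K).filter (fun e => (K.filter (fun t => e ⊆ t)).card = 1)

/-- Boundary vertices. -/
def bdryVertices (K : Complex) : Finset ℕ := (bdryEdges K).biUnion id

/-- Interior vertices. -/
def intVertices (K : Complex) : Finset ℕ := vertices K \ bdryVertices K

/-- A triangulated disc: a connected compact surface with nonempty boundary and
Euler characteristic 1. -/
def IsDisc (K : Complex) : Prop :=
  IsSurface K ∧ eulerChar K = 1 ∧ (bdryEdges K).Nonempty

/-- Two edges sharing a vertex. -/
def edgeAdj (E : Complex) (e₁ e₂ : Finset ℕ) : Prop :=
  e₁ ∈ E ∧ e₂ ∈ E ∧ (e₁ ∩ e₂).Nonempty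

/-- A set of edges forming a triangulated circle. -/
def IsCircle (E : Complex) : Prop :=
  E.Nonempty ∧ (∀ e ∈ E, e.card = 2) ∧
  (∀ v ∈ E.biUnion id, (E.filter (fun e => v ∈ e)).card = 2) ∧
  ∀ e₁ ∈ E, ∀ e₂ ∈ E, Relation.ReflTransGen (edgeAdj E) e₁ e₂

/-- Simplicial isomorphism (re-labeling). -/
def Iso (K₁ K₂ : Complex) : Prop :=
  ∃ f : ℕ → ℕ, Set.InjOn f (vertices K₁) ∧ K₁.image (Finset.image f) = K₂

/-- The boundary of the tetrahedron. -/
def tetra : Complex := {{1,2,3},{1,2,4},{1,3,4},{2,3,4}}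

/-- The boundary of the octahedron. -/
def octa : Complex := {{1,2,3},{1,2,4},{1,3,5},{1,4,5},{2,3,6},{2,4,6},{3,5,6},{4,5,6}}

/-- The vertices of the link of a vertex. -/
def linkV (K : Complex) (v : ℕ) : Finset ℕ :=
  ((K.filter (fun t => v ∈ t)).biUnion id).erase v

/-- The result of the inverse T-move removing the vertex `v`. -/
def invT (K : Complex) (v : ℕ) : Complex :=
  insert (linkV K v) (K.filter (fun t => v ∉ t))

/-- `K'` is obtained from `K` by an inverse T-move: a 3-valent vertex whose
link does not bound a triangle is removed. -/
def InvTStep (K K' : Complex) : Prop :=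
  ∃ v, valence K v = 3 ∧ linkV K v ∉ K ∧ K' = invT K v

/-- A root: a closed triangulated surface admitting no inverse T-move. -/
def IsRoot (K : Complex) : Prop := IsClosedSurface K ∧ ∀ K', ¬ InvTStep K K'

/-- `R` is a root of `K`: obtained from `K` by inverse T-moves, with no
further inverse T-move applicable. -/
def IsRootOf (R K : Complex) : Prop :=
  Relation.ReflTransGen InvTStep K R ∧ ∀ R', ¬ InvTStep R R'

/-- The directed edges of an ordered triangle. -/
def dedges (p : ℕ × ℕ × ℕ) : Finset (ℕ × ℕ) := {(p.1, p.2.1), (p.2.1, p.2.2), (p.2.2, p.1)}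

/-- Orientability: a coherent choice of cyclic orders on the triangles,
i.e. no directed edge is shared by two distinct triangles. -/
def Orientable (K : Complex) : Prop :=
  ∃ o : Finset ℕ → ℕ × ℕ × ℕ,
    (∀ t ∈ K, ({(o t).1, (o t).2.1, (o t).2.2} : Finset ℕ) = t) ∧
    ∀ t₁ ∈ K, ∀ t₂ ∈ K, t₁ ≠ t₂ → ∀ p ∈ dedges (o t₁), p ∉ dedges (o t₂)

/-- Two closed triangulated surfaces triangulate the same surface iff they
have the same Euler characteristic and the same orientability. -/
def SameSurface (K₁ K₂ : Complex) : Prop :=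
  eulerChar K₁ = eulerChar K₂ ∧ (Orientable K₁ ↔ Orientable K₂)

/-- The intersection of two subcomplexes is a triangulated circle or empty. -/
def CircleInter (A B : Complex) : Prop :=
  (IsCircle (edges A ∩ edges B) ∨ edges A ∩ edges B = ∅) ∧
  vertices A ∩ vertices B = (edges A ∩ edges B).biUnion id

/-- A decomposition `(G, D, Ds)` of a closed triangulated surface `K`. -/
structure IsDecomp (K G D : Complex) (Ds : Finset Complex) : Prop where
  closed : IsClosedSurface K
  subG : G ⊆ K
  subD : D ⊆ K
  subDs : ∀ Di ∈ Ds, Di ⊆ K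
  surfG : IsSurface G
  discD : IsDisc D
  discDs : ∀ Di ∈ Ds, IsDisc Di
  maxv : ∃ v ∈ intVertices D, valence K v = mv K
  cover : G ∪ D ∪ Ds.sup id = K
  disjGD : Disjoint G D
  disjGDs : ∀ Di ∈ Ds, Disjoint G Di
  disjDDs : ∀ Di ∈ Ds, Disjoint D Di
  disjDsDs : ∀ Di ∈ Ds, ∀ Dj ∈ Ds, Di ≠ Dj → Disjoint Di Dj
  interGD : CircleInter G D
  interGDs : ∀ Di ∈ Ds, CircleInter G Di
  interDDs : ∀ Di ∈ Ds, CircleInter D Di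
  interDsDs : ∀ Di ∈ Ds, ∀ Dj ∈ Ds, Di ≠ Dj → CircleInter Di Dj

/-- A minimal decomposition: the genus-surface has the fewest triangles. -/
def IsMinDecomp (K G D : Complex) (Ds : Finset Complex) : Prop :=
  IsDecomp K G D Ds ∧ ∀ G' D' Ds', IsDecomp K G' D' Ds' → G.card ≤ G'.card

lemma mem_edges_of (K : Complex) {t e : Finset ℕ} (ht : t ∈ K) (he : e ⊆ t) (hc : e.card = 2) :
    e ∈ edges K := by
  simp only [edges, Finset.mem_biUnion, Finset.mem_powersetCard]
  exact ⟨t, ht, he, hc⟩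

lemma pair_filter (K : Complex) (e : Finset ℕ)
    (h2 : (K.filter (fun t => e ⊆ t)).card = 2)
    {s₁ s₂ : Finset ℕ} (hs₁ : s₁ ∈ K) (hs₂ : s₂ ∈ K) (he₁ : e ⊆ s₁) (he₂ : e ⊆ s₂)
    (hne : s₁ ≠ s₂) : ∀ t ∈ K, e ⊆ t → t = s₁ ∨ t = s₂ := by
  have hsub : ({s₁, s₂} : Finset (Finset ℕ)) ⊆ K.filter (fun t => e ⊆ t) := by
    intro x hx
    simp only [Finset.mem_insert, Finset.mem_singleton] at hx
    rcases hx with rfl | rfl <;> simp [Finset.mem_filter, hs₁, hs₂, he₁, he₂]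
  have heq : ({s₁, s₂} : Finset (Finset ℕ)) = K.filter (fun t => e ⊆ t) :=
    Finset.eq_of_subset_of_card_le hsub (by rw [h2, Finset.card_pair hne])
  intro t ht het
  have : t ∈ ({s₁, s₂} : Finset (Finset ℕ)) := by
    rw [heq]; simp [Finset.mem_filter, ht, het]
  simpa using this

lemma other_of_card_two {F : Finset (Finset ℕ)} (h2 : F.card = 2) {x : Finset ℕ}
    (hx : x ∈ F) : ∃ y ∈ F, y ≠ x ∧ F = {x, y} := by
  obtain ⟨p, q, hpq, rfl⟩ := Finset.card_eq_two.mp h2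
  simp only [Finset.mem_insert, Finset.mem_singleton] at hx
  rcases hx with rfl | rfl
  · exact ⟨q, by simp, hpq.symm, rfl⟩
  · exact ⟨p, by simp, hpq, Finset.pair_comm p x⟩

lemma third_of_pair_subset {t : Finset ℕ} {v w : ℕ} (hvw : v ≠ w)
    (hsub : ({v, w} : Finset ℕ) ⊆ t) (hc : t.card = 3) :
    ∃ a, a ≠ v ∧ a ≠ w ∧ t = {v, w, a} := by
  have h1 : (t \ {v, w}).card = 1 := by
    rw [Finset.card_sdiff_of_subset hsub, hc, Finset.card_pair hvw]
  obtain ⟨a, ha⟩ := Finset.card_eq_one.mp h1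
  have hav : a ∈ t \ ({v, w} : Finset ℕ) := ha ▸ Finset.mem_singleton_self a
  simp only [Finset.mem_sdiff, Finset.mem_insert, Finset.mem_singleton] at hav
  refine ⟨a, fun h => hav.2 (Or.inl h), fun h => hav.2 (Or.inr h), ?_⟩
  apply Finset.Subset.antisymm
  · intro x hx
    by_cases hxm : x ∈ ({v, w} : Finset ℕ)
    · simp only [Finset.mem_insert, Finset.mem_singleton] at hxm ⊢; tauto
    · have hx' : x ∈ t \ ({v, w} : Finset ℕ) := Finset.mem_sdiff.mpr ⟨hx, hxm⟩
      rw [ha] at hx'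
      simp only [Finset.mem_singleton] at hx'
      simp [hx']
  · intro x hx
    simp only [Finset.mem_insert, Finset.mem_singleton] at hx
    rcases hx with rfl | rfl | rfl
    · exact hsub (by simp)
    · exact hsub (by simp)
    · exact hav.1

lemma two_subset_of_three {e : Finset ℕ} {x y z : ℕ} (hsub : e ⊆ {x, y, z})
    (hc : e.card = 2) : e = {x, y} ∨ e = {x, z} ∨ e = {y, z} := by
  obtain ⟨p, q, hpq, rfl⟩ := Finset.card_eq_two.mp hc
  have hp : p ∈ ({x, y, z} : Finset ℕ) := hsub (by simp)
  have hq : q ∈ ({x, y, z} : Finset ℕ) := hsub (by simp)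
  simp only [Finset.mem_insert, Finset.mem_singleton] at hp hq
  rcases hp with rfl | rfl | rfl <;> rcases hq with rfl | rfl | rfl <;>
    first
      | exact absurd rfl hpq
      | exact Or.inl rfl
      | exact Or.inr (Or.inl rfl)
      | exact Or.inr (Or.inr rfl)
      | exact Or.inl (Finset.pair_comm _ _)
      | exact Or.inr (Or.inl (Finset.pair_comm _ _))
      | exact Or.inr (Or.inr (Finset.pair_comm _ _))

/-- The third triangle at a 3-valent vertex `u` whose first two triangles are
`t₁ ∋ a` and `t₂ ∋ b`. -/
lemma third_triangle (K : Complex) (hs : IsSurface K)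
    (hclosed : ∀ e ∈ edges K, (K.filter (fun t => e ⊆ t)).card = 2)
    (u a b : ℕ) (t₁ t₂ : Finset ℕ) (hu : valence K u = 3)
    (ht₁ : t₁ ∈ K) (ht₂ : t₂ ∈ K) (hne : t₁ ≠ t₂)
    (hut₁ : u ∈ t₁) (hut₂ : u ∈ t₂) (hat₁ : a ∈ t₁) (hat₂ : a ∉ t₂)
    (hbt₂ : b ∈ t₂) (hbt₁ : b ∉ t₁) (hua : u ≠ a) (hub : u ≠ b) :
    ({u, a, b} : Finset ℕ) ∈ K := by
  have hab : a ≠ b := fun h => hat₂ (h ▸ hbt₂)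
  -- the other triangle on edge {u,a}
  have hea : ({u, a} : Finset ℕ) ⊆ t₁ := by
    intro x hx; simp only [Finset.mem_insert, Finset.mem_singleton] at hx
    rcases hx with rfl | rfl <;> assumption
  have hcard_a : (K.filter (fun t => ({u, a} : Finset ℕ) ⊆ t)).card = 2 :=
    hclosed _ (mem_edges_of K ht₁ hea (Finset.card_pair hua))
  have ht₁a : t₁ ∈ K.filter (fun t => ({u, a} : Finset ℕ) ⊆ t) :=
    Finset.mem_filter.mpr ⟨ht₁, hea⟩
  obtain ⟨s, hsF, hst₁, hFa⟩ := other_of_card_two hcard_a ht₁a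
  have hsK : s ∈ K := (Finset.mem_filter.mp hsF).1
  have hsua : ({u, a} : Finset ℕ) ⊆ s := (Finset.mem_filter.mp hsF).2
  have hus : u ∈ s := hsua (by simp)
  have has : a ∈ s := hsua (by simp)
  have hst₂ : s ≠ t₂ := fun h => hat₂ (h ▸ has)
  -- the valence filter at u equals {t₁, t₂, s}
  have hsubF : ({t₁, t₂, s} : Finset (Finset ℕ)) ⊆ K.filter (fun t => u ∈ t) := by
    intro x hx
    simp only [Finset.mem_insert, Finset.mem_singleton] at hx
    rcases hx with rfl | rfl | rfl <;> exact Finset.mem_filter.mpr ⟨by assumption, by assumption⟩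
  have hcard3 : ({t₁, t₂, s} : Finset (Finset ℕ)).card = 3 := by
    rw [Finset.card_insert_of_notMem, Finset.card_insert_of_notMem, Finset.card_singleton]
    · simp only [Finset.mem_singleton]; exact hst₂.symm
    · simp only [Finset.mem_insert, Finset.mem_singleton]
      push_neg; exact ⟨hne, hst₁.symm⟩
  have hFu : ({t₁, t₂, s} : Finset (Finset ℕ)) = K.filter (fun t => u ∈ t) :=
    Finset.eq_of_subset_of_card_le hsubF (by rw [hcard3]; exact le_of_eq hu)
  -- the other triangle on edge {u,b}
  have heb : ({u, b} : Finset ℕ) ⊆ t₂ := by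
    intro x hx; simp only [Finset.mem_insert, Finset.mem_singleton] at hx
    rcases hx with rfl | rfl <;> assumption
  have hcard_b : (K.filter (fun t => ({u, b} : Finset ℕ) ⊆ t)).card = 2 :=
    hclosed _ (mem_edges_of K ht₂ heb (Finset.card_pair hub))
  have ht₂b : t₂ ∈ K.filter (fun t => ({u, b} : Finset ℕ) ⊆ t) :=
    Finset.mem_filter.mpr ⟨ht₂, heb⟩
  obtain ⟨s', hsF', hst₂', hFb⟩ := other_of_card_two hcard_b ht₂b
  have hsK' : s' ∈ K := (Finset.mem_filter.mp hsF').1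
  have hsub' : ({u, b} : Finset ℕ) ⊆ s' := (Finset.mem_filter.mp hsF').2
  have hbs' : b ∈ s' := hsub' (by simp)
  have hs'F : s' ∈ ({t₁, t₂, s} : Finset (Finset ℕ)) := by
    rw [hFu]; exact Finset.mem_filter.mpr ⟨hsK', hsub' (by simp)⟩
  have hs't₁ : s' ≠ t₁ := fun h => hbt₁ (h ▸ hbs')
  have hs's : s' = s := by
    simp only [Finset.mem_insert, Finset.mem_singleton] at hs'F
    rcases hs'F with h | h | h
    · exact absurd h hs't₁
    · exact absurd h hst₂'
    · exact h
  have hbs : b ∈ s := hs's ▸ hbs'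
  -- conclude s = {u, a, b}
  have hsub3 : ({u, a, b} : Finset ℕ) ⊆ s := by
    intro x hx; simp only [Finset.mem_insert, Finset.mem_singleton] at hx
    rcases hx with rfl | rfl | rfl <;> assumption
  have hc3 : ({u, a, b} : Finset ℕ).card = 3 := by
    rw [Finset.card_insert_of_notMem, Finset.card_pair hab]
    simp only [Finset.mem_insert, Finset.mem_singleton]; push_neg; exact ⟨hua, hub⟩
  have : ({u, a, b} : Finset ℕ) = s :=
    Finset.eq_of_subset_of_card_le hsub3 (by rw [hs.card3 s hsK, hc3])
  rw [this]; exact hsK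

set_option maxHeartbeats 1000000 in
/-- two adjacent 3-valent vertices force the tetrahedron boundary
(exactly 4 vertices and 4 triangles). -/
theorem adjacent_three_valent_tetra (K : Complex) (h : IsClosedSurface K)
    (v w : ℕ) (hvw : v ≠ w) (hv : valence K v = 3) (hw : valence K w = 3)
    (hadj : ({v, w} : Finset ℕ) ∈ edges K) :
    (vertices K).card = 4 ∧ K.card = 4 := by
  obtain ⟨hs, hclosed⟩ := h
  have hvw2 : (K.filter (fun t => ({v, w} : Finset ℕ) ⊆ t)).card = 2 := hclosed _ hadj
  obtain ⟨p, q, hpqne, hpq⟩ := Finset.card_eq_two.mp hvw2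
  have hpmem : p ∈ K ∧ ({v, w} : Finset ℕ) ⊆ p := by
    have : p ∈ K.filter (fun t => ({v, w} : Finset ℕ) ⊆ t) := by rw [hpq]; simp
    simpa using this
  have hqmem : q ∈ K ∧ ({v, w} : Finset ℕ) ⊆ q := by
    have : q ∈ K.filter (fun t => ({v, w} : Finset ℕ) ⊆ t) := by rw [hpq]; simp
    simpa using this
  obtain ⟨a, hav, haw, hpe⟩ := third_of_pair_subset hvw hpmem.2 (hs.card3 p hpmem.1)
  obtain ⟨b, hbv, hbw, hqe⟩ := third_of_pair_subset hvw hqmem.2 (hs.card3 q hqmem.1)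
  have hab : a ≠ b := by
    intro hEq; apply hpqne; rw [hpe, hqe, hEq]
  have ht1K : ({v, w, a} : Finset ℕ) ∈ K := hpe ▸ hpmem.1
  have ht2K : ({v, w, b} : Finset ℕ) ∈ K := hqe ▸ hqmem.1
  have hne12 : ({v, w, a} : Finset ℕ) ≠ {v, w, b} := by
    rw [← hpe, ← hqe]; exact hpqne
  -- the two remaining triangles
  have ht3K : ({v, a, b} : Finset ℕ) ∈ K := by
    refine third_triangle K hs hclosed v a b {v, w, a} {v, w, b} hv ht1K ht2K hne12
      (by simp) (by simp) (by simp) ?_ (by simp) ?_ hav.symm hbv.symm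
    · simp only [Finset.mem_insert, Finset.mem_singleton]; push_neg
      exact ⟨hav, haw, hab⟩
    · simp only [Finset.mem_insert, Finset.mem_singleton]; push_neg
      exact ⟨hbv, hbw, hab.symm⟩
  have ht4K : ({w, a, b} : Finset ℕ) ∈ K := by
    refine third_triangle K hs hclosed w a b {v, w, a} {v, w, b} hw ht1K ht2K hne12
      (by simp) (by simp) (by simp) ?_ (by simp) ?_ haw.symm hbw.symm
    · simp only [Finset.mem_insert, Finset.mem_singleton]; push_neg
      exact ⟨hav, haw, hab⟩
    · simp only [Finset.mem_insert, Finset.mem_singleton]; push_neg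
      exact ⟨hbv, hbw, hab.symm⟩
  -- distinctness of triangles
  have hwn3 : w ∉ ({v, a, b} : Finset ℕ) := by
    simp only [Finset.mem_insert, Finset.mem_singleton]; push_neg
    exact ⟨hvw.symm, haw.symm, hbw.symm⟩
  have hvn4 : v ∉ ({w, a, b} : Finset ℕ) := by
    simp only [Finset.mem_insert, Finset.mem_singleton]; push_neg
    exact ⟨hvw, hav.symm, hbv.symm⟩
  have hne13 : ({v, w, a} : Finset ℕ) ≠ {v, a, b} := fun hEq => hwn3 (hEq ▸ (by simp))
  have hne14 : ({v, w, a} : Finset ℕ) ≠ {w, a, b} := fun hEq => hvn4 (hEq ▸ (by simp))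
  have hne23 : ({v, w, b} : Finset ℕ) ≠ {v, a, b} := fun hEq => hwn3 (hEq ▸ (by simp))
  have hne24 : ({v, w, b} : Finset ℕ) ≠ {w, a, b} := fun hEq => hvn4 (hEq ▸ (by simp))
  have hne34 : ({v, a, b} : Finset ℕ) ≠ {w, a, b} := by
    intro hEq; exact hvn4 (hEq ▸ (by simp))
  -- the six "both triangles of each edge" facts
  have epair : ∀ (x y : ℕ) (t : Finset ℕ), x ∈ t → y ∈ t → ({x, y} : Finset ℕ) ⊆ t := by
    intro x y t hx hy z hz
    simp only [Finset.mem_insert, Finset.mem_singleton] at hz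
    rcases hz with rfl | rfl <;> assumption
  have Pvw : ∀ t ∈ K, ({v, w} : Finset ℕ) ⊆ t → t = {v, w, a} ∨ t = {v, w, b} :=
    pair_filter K _ hvw2 ht1K ht2K (epair v w _ (by simp) (by simp))
      (epair v w _ (by simp) (by simp)) hne12
  have Pva : ∀ t ∈ K, ({v, a} : Finset ℕ) ⊆ t → t = {v, w, a} ∨ t = {v, a, b} :=
    pair_filter K _ (hclosed _ (mem_edges_of K ht1K
      (epair v a _ (by simp) (by simp)) (Finset.card_pair hav.symm)))
      ht1K ht3K (epair v a _ (by simp) (by simp)) (epair v a _ (by simp) (by simp)) hne13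
  have Pvb : ∀ t ∈ K, ({v, b} : Finset ℕ) ⊆ t → t = {v, w, b} ∨ t = {v, a, b} :=
    pair_filter K _ (hclosed _ (mem_edges_of K ht2K
      (epair v b _ (by simp) (by simp)) (Finset.card_pair hbv.symm)))
      ht2K ht3K (epair v b _ (by simp) (by simp)) (epair v b _ (by simp) (by simp)) hne23
  have Pwa : ∀ t ∈ K, ({w, a} : Finset ℕ) ⊆ t → t = {v, w, a} ∨ t = {w, a, b} :=
    pair_filter K _ (hclosed _ (mem_edges_of K ht1K
      (epair w a _ (by simp) (by simp)) (Finset.card_pair haw.symm)))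
      ht1K ht4K (epair w a _ (by simp) (by simp)) (epair w a _ (by simp) (by simp)) hne14
  have Pwb : ∀ t ∈ K, ({w, b} : Finset ℕ) ⊆ t → t = {v, w, b} ∨ t = {w, a, b} :=
    pair_filter K _ (hclosed _ (mem_edges_of K ht2K
      (epair w b _ (by simp) (by simp)) (Finset.card_pair hbw.symm)))
      ht2K ht4K (epair w b _ (by simp) (by simp)) (epair w b _ (by simp) (by simp)) hne24
  have Pab : ∀ t ∈ K, ({a, b} : Finset ℕ) ⊆ t → t = {v, a, b} ∨ t = {w, a, b} :=
    pair_filter K _ (hclosed _ (mem_edges_of K ht3K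
      (epair a b _ (by simp) (by simp)) (Finset.card_pair hab)))
      ht3K ht4K (epair a b _ (by simp) (by simp)) (epair a b _ (by simp) (by simp)) hne34
  -- closure under adjacency
  have closure : ∀ t₁ t₂ : Finset ℕ,
      (t₁ = {v, w, a} ∨ t₁ = {v, w, b} ∨ t₁ = {v, a, b} ∨ t₁ = {w, a, b}) →
      adj K t₁ t₂ →
      t₂ = {v, w, a} ∨ t₂ = {v, w, b} ∨ t₂ = {v, a, b} ∨ t₂ = {w, a, b} := by
    rintro t₁ t₂ hbS ⟨h1K, h2K, hcard⟩
    have hsub₁ : t₁ ∩ t₂ ⊆ t₁ := Finset.inter_subset_left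
    have hsub₂ : t₁ ∩ t₂ ⊆ t₂ := Finset.inter_subset_right
    rcases hbS with rfl | rfl | rfl | rfl
    · rcases two_subset_of_three hsub₁ hcard with hEq | hEq | hEq
      · rcases Pvw t₂ h2K (hEq ▸ hsub₂) with h' | h' <;> tauto
      · rcases Pva t₂ h2K (hEq ▸ hsub₂) with h' | h' <;> tauto
      · rcases Pwa t₂ h2K (hEq ▸ hsub₂) with h' | h' <;> tauto
    · rcases two_subset_of_three hsub₁ hcard with hEq | hEq | hEq
      · rcases Pvw t₂ h2K (hEq ▸ hsub₂) with h' | h' <;> tauto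
      · rcases Pvb t₂ h2K (hEq ▸ hsub₂) with h' | h' <;> tauto
      · rcases Pwb t₂ h2K (hEq ▸ hsub₂) with h' | h' <;> tauto
    · rcases two_subset_of_three hsub₁ hcard with hEq | hEq | hEq
      · rcases Pva t₂ h2K (hEq ▸ hsub₂) with h' | h' <;> tauto
      · rcases Pvb t₂ h2K (hEq ▸ hsub₂) with h' | h' <;> tauto
      · rcases Pab t₂ h2K (hEq ▸ hsub₂) with h' | h' <;> tauto
    · rcases two_subset_of_three hsub₁ hcard with hEq | hEq | hEq
      · rcases Pwa t₂ h2K (hEq ▸ hsub₂) with h' | h' <;> tauto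
      · rcases Pwb t₂ h2K (hEq ▸ hsub₂) with h' | h' <;> tauto
      · rcases Pab t₂ h2K (hEq ▸ hsub₂) with h' | h' <;> tauto
  have hKall : ∀ t ∈ K,
      t = {v, w, a} ∨ t = {v, w, b} ∨ t = {v, a, b} ∨ t = {w, a, b} := by
    intro t ht
    have hchain := hs.conn _ ht1K t ht
    clear ht
    induction hchain with
    | refl => exact Or.inl rfl
    | tail _ hstep ih => exact closure _ _ ih hstep
  have hKeq : K = ({{v, w, a}, {v, w, b}, {v, a, b}, {w, a, b}} : Finset (Finset ℕ)) := by
    apply Finset.Subset.antisymm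
    · intro t ht
      simp only [Finset.mem_insert, Finset.mem_singleton]
      exact hKall t ht
    · intro t ht
      simp only [Finset.mem_insert, Finset.mem_singleton] at ht
      rcases ht with rfl | rfl | rfl | rfl <;> assumption
  constructor
  · have hV : vertices K = ({v, w, a, b} : Finset ℕ) := by
      rw [vertices, hKeq]
      ext x
      simp only [Finset.mem_biUnion, Finset.mem_insert, Finset.mem_singleton, id]
      constructor
      · rintro ⟨t, ht, hx⟩
        rcases ht with rfl | rfl | rfl | rfl <;>
          (simp only [Finset.mem_insert, Finset.mem_singleton] at hx; tauto)
      · rintro (rfl | rfl | rfl | rfl)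
        · exact ⟨_, Or.inl rfl, by simp⟩
        · exact ⟨_, Or.inl rfl, by simp⟩
        · exact ⟨_, Or.inl rfl, by simp⟩
        · exact ⟨_, Or.inr (Or.inl rfl), by simp⟩
    rw [hV]
    rw [Finset.card_insert_of_notMem, Finset.card_insert_of_notMem, Finset.card_pair hab]
    · simp only [Finset.mem_insert, Finset.mem_singleton]; push_neg
      exact ⟨haw.symm, hbw.symm⟩
    · simp only [Finset.mem_insert, Finset.mem_singleton]; push_neg
      exact ⟨hvw, hav.symm, hbv.symm⟩
  · rw [hKeq]
    rw [Finset.card_insert_of_notMem, Finset.card_insert_of_notMem,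
      Finset.card_pair hne34]
    · simp only [Finset.mem_insert, Finset.mem_singleton]; push_neg
      exact ⟨hne23, hne24⟩
    · simp only [Finset.mem_insert, Finset.mem_singleton]; push_neg
      exact ⟨hne12, hne13, hne14⟩

end Tri
end

section
/- In a triangulation of a closed surface other than the boundary of the tetrahedron, if v is a 3-valent vertex then the link of v does not bound a triangle of the triangulation; consequently an inverse T-move removing v can be applied. -/
namespace Tri

section Helpers

lemma mem_edges_iff {K : Complex} {e : Finset ℕ} :
    e ∈ edges K ↔ ∃ t ∈ K, e ⊆ t ∧ e.card = 2 := by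
  simp [edges, Finset.mem_powersetCard]

lemma rtg_map {α β : Type*} {r : α → α → Prop} {r' : β → β → Prop} (f : α → β)
    (H : ∀ x y, r x y → Relation.ReflTransGen r' (f x) (f y)) {x y : α}
    (h : Relation.ReflTransGen r x y) : Relation.ReflTransGen r' (f x) (f y) := by
  induction h with
  | refl => exact .refl
  | tail _ h ih => exact ih.trans (H _ _ h)

lemma orient_cases {x y z : ℕ} (hxy : x ≠ y) (hyz : y ≠ z) (hxz : x ≠ z) (p : ℕ × ℕ × ℕ)
    (hp : ({p.1, p.2.1, p.2.2} : Finset ℕ) = {x, y, z}) :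
    dedges p = {(x,y),(y,z),(z,x)} ∨ dedges p = {(x,z),(z,y),(y,x)} := by
  obtain ⟨p1, p2, p3⟩ := p
  simp only at hp
  have hc : ({x, y, z} : Finset ℕ).card = 3 := by
    rw [Finset.card_insert_of_notMem (by simp [hxy, hxz]),
      Finset.card_insert_of_notMem (by simp [hyz])]; rfl
  have h1 : p1 ∈ ({x,y,z} : Finset ℕ) := hp ▸ (by simp)
  have h2 : p2 ∈ ({x,y,z} : Finset ℕ) := hp ▸ (by simp)
  have h3 : p3 ∈ ({x,y,z} : Finset ℕ) := hp ▸ (by simp)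
  have hcard : ({p1,p2,p3} : Finset ℕ).card = 3 := by rw [hp]; exact hc
  have hpair : ∀ a b : ℕ, ({a,b} : Finset ℕ).card ≤ 2 := by
    intro a b
    calc ({a,b} : Finset ℕ).card ≤ ({b} : Finset ℕ).card + 1 := Finset.card_insert_le _ _
    _ = 2 := by simp
  have h12 : p1 ≠ p2 := by
    rintro rfl
    have he : ({p1,p1,p3} : Finset ℕ) = {p1,p3} := by ext q; simp
    rw [he] at hcard; have := hpair p1 p3; omega
  have h13 : p1 ≠ p3 := by
    rintro rfl
    have he : ({p1,p2,p1} : Finset ℕ) = {p1,p2} := by ext q; simp; tauto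
    rw [he] at hcard; have := hpair p1 p2; omega
  have h23 : p2 ≠ p3 := by
    rintro rfl
    have he : ({p1,p2,p2} : Finset ℕ) = {p1,p2} := by ext q; simp
    rw [he] at hcard; have := hpair p1 p2; omega
  simp only [Finset.mem_insert, Finset.mem_singleton] at h1 h2 h3
  have key : ∀ q ∈ ({x,y,z} : Finset ℕ), q = p1 ∨ q = p2 ∨ q = p3 := by
    intro q hq; rw [← hp] at hq; simpa using hq
  have hx := key x (by simp)
  have hy := key y (by simp)
  have hz := key z (by simp)
  rcases h1 with rfl | rfl | rfl <;> rcases h2 with rfl | rfl | rfl <;>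
    rcases h3 with rfl | rfl | rfl <;>
    simp_all [dedges] <;>
    first
      | (left; ext q; simp; tauto)
      | (right; ext q; simp; tauto)

lemma mem_dedges_fst {p : ℕ × ℕ × ℕ} {q : ℕ × ℕ} (h : q ∈ dedges p) :
    q.1 ∈ ({p.1, p.2.1, p.2.2} : Finset ℕ) ∧ q.2 ∈ ({p.1, p.2.1, p.2.2} : Finset ℕ) := by
  simp [dedges] at h
  rcases h with rfl | rfl | rfl <;> simp


lemma card_pair {α : Type*} [DecidableEq α] {x y : α} (h : x ≠ y) : ({x, y} : Finset α).card = 2 := by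
  rw [Finset.card_insert_of_notMem (by simp [h])]; rfl

lemma card_triple {α : Type*} [DecidableEq α] {x y z : α} (hxy : x ≠ y) (hyz : y ≠ z) (hxz : x ≠ z) :
    ({x, y, z} : Finset α).card = 3 := by
  rw [Finset.card_insert_of_notMem (by simp [hxy, hxz]), card_pair hyz]

lemma tri_struct {t : Finset ℕ} (ht : t.card = 3) {v : ℕ} (hv : v ∈ t) :
    ∃ a b, a ≠ b ∧ v ≠ a ∧ v ≠ b ∧ t = {v, a, b} := by
  have h2 : (t.erase v).card = 2 := by rw [Finset.card_erase_of_mem hv, ht]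
  obtain ⟨a, b, hab, he⟩ := Finset.card_eq_two.mp h2
  have ha : a ∈ t.erase v := he ▸ (by simp)
  have hb : b ∈ t.erase v := he ▸ (by simp)
  refine ⟨a, b, hab, (Finset.ne_of_mem_erase ha).symm, (Finset.ne_of_mem_erase hb).symm, ?_⟩
  rw [show ({v, a, b} : Finset ℕ) = insert v (t.erase v) from by rw [he]]
  rw [Finset.insert_erase hv]

lemma tri_third {t : Finset ℕ} (ht : t.card = 3) {x y : ℕ} (hxy : x ≠ y)
    (hx : x ∈ t) (hy : y ∈ t) :
    ∃ c, c ≠ x ∧ c ≠ y ∧ t = {x, y, c} := by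
  obtain ⟨a, b, hab, hxa, hxb, he⟩ := tri_struct ht hx
  have : y = a ∨ y = b := by
    have : y ∈ t := hy
    rw [he] at this; simp at this; tauto
  rcases this with rfl | rfl
  · exact ⟨b, fun hh => hxb hh.symm, fun hh => hab hh.symm, by rw [he]⟩
  · refine ⟨a, fun h => hxa h.symm, hab, ?_⟩
    rw [he]; ext q; simp; tauto

/-- The fan structure around a 3-valent vertex of a closed surface. -/
lemma fan {K : Complex} (h : IsClosedSurface K) {v : ℕ} (h3 : valence K v = 3) :
    ∃ a b c : ℕ, v ≠ a ∧ v ≠ b ∧ v ≠ c ∧ a ≠ b ∧ b ≠ c ∧ a ≠ c ∧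
      K.filter (fun t => v ∈ t) = {{v, a, b}, {v, b, c}, {v, c, a}} := by
  obtain ⟨hS, hE⟩ := h
  set T := K.filter (fun t => v ∈ t) with hT
  have hTmem : ∀ t ∈ T, t ∈ K ∧ v ∈ t := by intro t ht; rw [hT] at ht; simpa using ht
  have hTcard : T.card = 3 := h3
  obtain ⟨t₁, ht₁⟩ : T.Nonempty := Finset.card_pos.mp (by omega)
  obtain ⟨ht₁K, hvt₁⟩ := hTmem t₁ ht₁
  obtain ⟨a, b, hab, hva, hvb, ht₁e⟩ := tri_struct (hS.card3 t₁ ht₁K) hvt₁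
  -- the other triangle on edge {v,a}
  have hvaE : ({v, a} : Finset ℕ) ∈ edges K :=
    mem_edges_iff.mpr ⟨t₁, ht₁K, by rw [ht₁e]; intro q; simp; tauto, card_pair hva⟩
  have hva2 := hE _ hvaE
  have ht₁m : t₁ ∈ K.filter (fun t => ({v, a} : Finset ℕ) ⊆ t) := by
    simp only [Finset.mem_filter]
    exact ⟨ht₁K, by rw [ht₁e]; intro q; simp; tauto⟩
  obtain ⟨t₃, ht₃m, ht₃ne⟩ := Finset.exists_mem_ne
    (show 1 < (K.filter (fun t => ({v, a} : Finset ℕ) ⊆ t)).card by omega) t₁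
  rw [Finset.mem_filter] at ht₃m
  obtain ⟨ht₃K, ht₃sub⟩ := ht₃m
  have hvt₃ : v ∈ t₃ := ht₃sub (by simp)
  have hat₃ : a ∈ t₃ := ht₃sub (by simp)
  obtain ⟨c, hcv, hca, ht₃e⟩ := tri_third (hS.card3 t₃ ht₃K) hva hvt₃ hat₃
  have hcb : c ≠ b := by
    rintro rfl
    apply ht₃ne
    rw [ht₃e, ht₁e]
  -- the other triangle on edge {v,b}
  have hvbE : ({v, b} : Finset ℕ) ∈ edges K :=
    mem_edges_iff.mpr ⟨t₁, ht₁K, by rw [ht₁e]; intro q; simp; tauto, card_pair hvb⟩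
  have hvb2 := hE _ hvbE
  have ht₁m' : t₁ ∈ K.filter (fun t => ({v, b} : Finset ℕ) ⊆ t) := by
    simp only [Finset.mem_filter]
    exact ⟨ht₁K, by rw [ht₁e]; intro q; simp; tauto⟩
  obtain ⟨t₂, ht₂m, ht₂ne⟩ := Finset.exists_mem_ne
    (show 1 < (K.filter (fun t => ({v, b} : Finset ℕ) ⊆ t)).card by omega) t₁
  rw [Finset.mem_filter] at ht₂m
  obtain ⟨ht₂K, ht₂sub⟩ := ht₂m
  have hvt₂ : v ∈ t₂ := ht₂sub (by simp)
  have hbt₂ : b ∈ t₂ := ht₂sub (by simp)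
  have hbt₃ : b ∉ t₃ := by rw [ht₃e]; simp; exact ⟨hvb.symm, hab.symm, hcb.symm⟩
  have ht₂t₃ : t₂ ≠ t₃ := fun hq => hbt₃ (hq ▸ hbt₂)
  obtain ⟨d, hdv, hdb, ht₂e⟩ := tri_third (hS.card3 t₂ ht₂K) hvb hvt₂ hbt₂
  have hda : d ≠ a := by
    rintro rfl
    apply ht₂ne
    rw [ht₂e, ht₁e]; ext q; simp; tauto
  -- T = {t₁, t₂, t₃}
  have ht₁T : t₁ ∈ T := ht₁
  have ht₂T : t₂ ∈ T := by rw [hT]; simp [ht₂K, hvt₂]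
  have ht₃T : t₃ ∈ T := by rw [hT]; simp [ht₃K, hvt₃]
  have hsub : ({t₁, t₂, t₃} : Finset (Finset ℕ)) ⊆ T := by
    intro q hq; simp at hq; rcases hq with rfl | rfl | rfl <;> assumption
  have hTeq : T = {t₁, t₂, t₃} := by
    refine (Finset.eq_of_subset_of_card_le hsub ?_).symm
    rw [hTcard]
    exact le_of_eq (card_triple ht₂ne.symm ht₂t₃ ht₃ne.symm).symm
  -- edge {v, c} forces d = c
  have hvcE : ({v, c} : Finset ℕ) ∈ edges K :=
    mem_edges_iff.mpr ⟨t₃, ht₃K, by rw [ht₃e]; intro q; simp; tauto, card_pair (Ne.symm hcv)⟩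
  have hvc2 := hE _ hvcE
  have ht₃m2 : t₃ ∈ K.filter (fun t => ({v, c} : Finset ℕ) ⊆ t) := by
    simp only [Finset.mem_filter]
    exact ⟨ht₃K, by rw [ht₃e]; intro q; simp; tauto⟩
  obtain ⟨t', ht'm, ht'ne⟩ := Finset.exists_mem_ne
    (show 1 < (K.filter (fun t => ({v, c} : Finset ℕ) ⊆ t)).card by omega) t₃
  rw [Finset.mem_filter] at ht'm
  obtain ⟨ht'K, ht'sub⟩ := ht'm
  have ht'T : t' ∈ T := by rw [hT]; simp [ht'K, ht'sub (by simp : v ∈ ({v,c}:Finset ℕ))]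
  have hct' : c ∈ t' := ht'sub (by simp)
  have ht'12 : t' = t₁ ∨ t' = t₂ := by
    rw [hTeq] at ht'T; simp at ht'T; tauto
  have hct₁ : c ∉ t₁ := by
    rw [ht₁e]; simp only [Finset.mem_insert, Finset.mem_singleton]; push_neg
    exact ⟨hcv, hca, hcb⟩
  have ht' : t' = t₂ := by
    rcases ht'12 with hq | hq
    · exact absurd (hq ▸ hct') hct₁
    · exact hq
  have hct₂ : c ∈ t₂ := ht' ▸ hct'
  have hcd : c = d := by
    rw [ht₂e] at hct₂
    simp only [Finset.mem_insert, Finset.mem_singleton] at hct₂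
    rcases hct₂ with hq | hq | hq
    · exact absurd hq hcv
    · exact absurd hq hcb
    · exact hq
  refine ⟨a, b, c, hva, hvb, Ne.symm hcv, hab, Ne.symm hcb, Ne.symm hca, ?_⟩
  subst hcd
  have h3e : t₃ = {v, c, a} := by
    rw [ht₃e]; ext q
    simp only [Finset.mem_insert, Finset.mem_singleton]
    tauto
  rw [hTeq, ht₁e, ht₂e, h3e]

/-- Packaging the fan structure around `v`. -/
structure FanAt (K : Complex) (v a b c : ℕ) : Prop where
  hva : v ≠ a
  hvb : v ≠ b
  hvc : v ≠ c
  hab : a ≠ b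
  hbc : b ≠ c
  hac : a ≠ c
  hF : K.filter (fun t => v ∈ t) = {{v, a, b}, {v, b, c}, {v, c, a}}

namespace FanAt

variable {K : Complex} {v a b c : ℕ}

lemma cycle (hf : FanAt K v a b c) : FanAt K v b c a := by
  refine ⟨hf.hvb, hf.hvc, hf.hva, hf.hbc, Ne.symm hf.hac, Ne.symm hf.hab, ?_⟩
  rw [hf.hF]; ext q
  simp only [Finset.mem_insert, Finset.mem_singleton]
  constructor
  · rintro (rfl | rfl | rfl) <;> tauto
  · rintro (rfl | rfl | rfl) <;> tauto

lemma reflect (hf : FanAt K v a b c) : FanAt K v a c b := by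
  refine ⟨hf.hva, hf.hvc, hf.hvb, hf.hac, Ne.symm hf.hbc, hf.hab, ?_⟩
  rw [hf.hF]; ext q
  simp only [Finset.mem_insert, Finset.mem_singleton]
  have e1 : ({v,a,c} : Finset ℕ) = {v,c,a} := by ext r; simp; tauto
  have e2 : ({v,c,b} : Finset ℕ) = {v,b,c} := by ext r; simp; tauto
  have e3 : ({v,b,a} : Finset ℕ) = {v,a,b} := by ext r; simp; tauto
  rw [e1, e2, e3]; tauto

lemma t1_mem (hf : FanAt K v a b c) : ({v, a, b} : Finset ℕ) ∈ K := by
  have : ({v,a,b} : Finset ℕ) ∈ K.filter (fun t => v ∈ t) := by rw [hf.hF]; simp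
  exact (Finset.mem_filter.mp this).1

lemma mem_filter_v (hf : FanAt K v a b c) {t : Finset ℕ} (ht : t ∈ K) (hvt : v ∈ t) :
    t = {v, a, b} ∨ t = {v, b, c} ∨ t = {v, c, a} := by
  have : t ∈ K.filter (fun t => v ∈ t) := Finset.mem_filter.mpr ⟨ht, hvt⟩
  rw [hf.hF] at this; simpa using this

lemma linkV_eq (hf : FanAt K v a b c) : linkV K v = {a, b, c} := by
  have hva := hf.hva; have hvb := hf.hvb; have hvc := hf.hvc
  ext q
  simp only [linkV, hf.hF, Finset.mem_erase, Finset.mem_biUnion, id_eq,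
    Finset.mem_insert, Finset.mem_singleton]
  constructor
  · rintro ⟨hq, t, (rfl | rfl | rfl), hqt⟩ <;> simp at hqt <;> tauto
  · rintro (rfl | rfl | rfl)
    · exact ⟨Ne.symm hva, insert v (insert q {b}), Or.inl rfl, by simp⟩
    · exact ⟨Ne.symm hvb, insert v (insert a {q}), Or.inl rfl, by simp⟩
    · exact ⟨Ne.symm hvc, insert v (insert b {q}), Or.inr (Or.inl rfl), by simp⟩

lemma v_not_L (hf : FanAt K v a b c) : v ∉ ({a, b, c} : Finset ℕ) := by
  simp only [Finset.mem_insert, Finset.mem_singleton]; push_neg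
  exact ⟨hf.hva, hf.hvb, hf.hvc⟩

end FanAt

lemma pairs_of_triple {x y z : ℕ} {e : Finset ℕ} (he : e ⊆ ({x, y, z} : Finset ℕ))
    (h2 : e.card = 2) : e = {x, y} ∨ e = {y, z} ∨ e = {x, z} := by
  obtain ⟨p, q, hpq, rfl⟩ := Finset.card_eq_two.mp h2
  have hp : p ∈ ({x,y,z} : Finset ℕ) := he (by simp)
  have hq : q ∈ ({x,y,z} : Finset ℕ) := he (by simp)
  simp only [Finset.mem_insert, Finset.mem_singleton] at hp hq
  have swap : ∀ u w : ℕ, ({u, w} : Finset ℕ) = {w, u} := by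
    intro u w; ext r; simp; tauto
  rcases hp with rfl | rfl | rfl <;> rcases hq with rfl | rfl | rfl <;>
    first
      | exact absurd rfl hpq
      | tauto
      | (rw [swap]; tauto)

/-- 2-element subsets of a fan triangle not containing `v` lie in the link. -/
lemma FanAt.edge_cases {K : Complex} {v a b c : ℕ} (hf : FanAt K v a b c)
    {t e : Finset ℕ} (ht : t ∈ K) (hvt : v ∈ t) (het : e ⊆ t) (he2 : e.card = 2)
    (hve : v ∉ e) : e = {a, b} ∨ e = {b, c} ∨ e = {c, a} := by
  have swap : ∀ u w : ℕ, ({u, w} : Finset ℕ) = {w, u} := by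
    intro u w; ext r; simp; tauto
  rcases hf.mem_filter_v ht hvt with rfl | rfl | rfl
  · have : e ⊆ ({v, a, b} : Finset ℕ) := het
    rcases pairs_of_triple this he2 with rfl | h | rfl
    · exact absurd (by simp) hve
    · tauto
    · exact absurd (by simp) hve
  · have : e ⊆ ({v, b, c} : Finset ℕ) := het
    rcases pairs_of_triple this he2 with rfl | h | rfl
    · exact absurd (by simp) hve
    · tauto
    · exact absurd (by simp) hve
  · have : e ⊆ ({v, c, a} : Finset ℕ) := het
    rcases pairs_of_triple this he2 with rfl | h | rfl
    · exact absurd (by simp) hve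
    · right; right; exact h
    · exact absurd (by simp) hve

/-- The outer triangle across the link edge `{a, b}`. -/
lemma FanAt.outer {K : Complex} {v a b c : ℕ} (h : IsClosedSurface K)
    (hf : FanAt K v a b c) :
    ∃ s ∈ K, v ∉ s ∧ ({a, b} : Finset ℕ) ⊆ s ∧
      K.filter (fun t => ({a, b} : Finset ℕ) ⊆ t) = {{v, a, b}, s} := by
  have hsub : ({a, b} : Finset ℕ) ⊆ {v, a, b} := by intro q; simp; tauto
  have hE : ({a, b} : Finset ℕ) ∈ edges K :=
    mem_edges_iff.mpr ⟨{v,a,b}, hf.t1_mem, hsub, card_pair hf.hab⟩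
  have h2 := h.2 _ hE
  have ht₁ : ({v,a,b} : Finset ℕ) ∈ K.filter (fun t => ({a, b} : Finset ℕ) ⊆ t) :=
    Finset.mem_filter.mpr ⟨hf.t1_mem, hsub⟩
  obtain ⟨s, hsm, hsne⟩ := Finset.exists_mem_ne
    (show 1 < (K.filter (fun t => ({a, b} : Finset ℕ) ⊆ t)).card by omega) {v,a,b}
  rw [Finset.mem_filter] at hsm
  obtain ⟨hsK, hssub⟩ := hsm
  have hvs : v ∉ s := by
    intro hvs
    rcases hf.mem_filter_v hsK hvs with rfl | rfl | rfl
    · exact hsne rfl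
    · have := hssub (by simp : a ∈ ({a,b} : Finset ℕ))
      simp at this
      rcases this with h' | h' | h'
      · exact hf.hva h'.symm
      · exact hf.hab h'
      · exact hf.hac h'
    · have := hssub (by simp : b ∈ ({a,b} : Finset ℕ))
      simp at this
      rcases this with h' | h' | h'
      · exact hf.hvb h'.symm
      · exact hf.hbc h'
      · exact hf.hab h'.symm
  refine ⟨s, hsK, hvs, hssub, ?_⟩
  have hsub2 : ({({v,a,b} : Finset ℕ), s} : Finset (Finset ℕ)) ⊆
      K.filter (fun t => ({a, b} : Finset ℕ) ⊆ t) := by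
    intro q hq; simp at hq
    rcases hq with rfl | rfl
    · exact ht₁
    · exact Finset.mem_filter.mpr ⟨hsK, hssub⟩
  refine (Finset.eq_of_subset_of_card_le hsub2 ?_).symm
  rw [h2]
  exact le_of_eq (card_pair (Ne.symm hsne)).symm

set_option maxHeartbeats 1000000 in
/-- If the link of the 3-valent vertex bounded a triangle, `K` would be the
tetrahedron boundary. -/
lemma FanAt.link_notMem {K : Complex} {v a b c : ℕ} (h : IsClosedSurface K)
    (hf : FanAt K v a b c) (hK : ¬ Iso K tetra) : ({a, b, c} : Finset ℕ) ∉ K := by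
  intro hL
  have hva := hf.hva; have hvb := hf.hvb; have hvc := hf.hvc
  have hab := hf.hab; have hbc := hf.hbc; have hac := hf.hac
  set K₀ : Complex := {{v,a,b},{v,b,c},{v,c,a},{a,b,c}} with hK₀
  have hmemK₀ : ∀ t : Finset ℕ, t ∈ K₀ ↔
      (t = {v,a,b} ∨ t = {v,b,c} ∨ t = {v,c,a} ∨ t = {a,b,c}) := by
    intro t; rw [hK₀]; simp
  have hK₀K : K₀ ⊆ K := by
    intro t ht
    rw [hmemK₀] at ht
    rcases ht with rfl | rfl | rfl | rfl
    · exact hf.t1_mem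
    · exact hf.cycle.t1_mem
    · exact hf.cycle.cycle.t1_mem
    · exact hL
  -- an edge in the link absorbs its two triangles into K₀
  have habs : ∀ x y z : ℕ, FanAt K v x y z → ({x,y,z} : Finset ℕ) ∈ K →
      ∀ s ∈ K, ({x, y} : Finset ℕ) ⊆ s → s = {v, x, y} ∨ s = {x, y, z} := by
    intro x y z hfx hLx s hs hsub
    obtain ⟨s', hs'K, hvs', hsub', hflt⟩ := hfx.outer h
    have hLf : ({x,y,z} : Finset ℕ) ∈ K.filter (fun t => ({x, y} : Finset ℕ) ⊆ t) :=
      Finset.mem_filter.mpr ⟨hLx, by intro q hq; simp at hq; simp; tauto⟩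
    have hsf : s ∈ K.filter (fun t => ({x, y} : Finset ℕ) ⊆ t) :=
      Finset.mem_filter.mpr ⟨hs, hsub⟩
    rw [hflt] at hLf hsf
    simp only [Finset.mem_insert, Finset.mem_singleton] at hLf hsf
    have hLne : ({x,y,z} : Finset ℕ) ≠ {v,x,y} := by
      intro hq
      have : v ∈ ({x,y,z} : Finset ℕ) := hq ▸ (by simp)
      exact hfx.v_not_L this
    have hs' : s' = {x,y,z} := by
      rcases hLf with hq | hq
      · exact absurd hq hLne
      · exact hq.symm
    rcases hsf with hq | hq
    · exact Or.inl hq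
    · exact Or.inr (hq.trans hs')
  have hclosed : ∀ t s : Finset ℕ, t ∈ K₀ → adj K t s → s ∈ K₀ := by
    intro t s htK₀ ⟨htK, hsK, hcard⟩
    by_cases hvs : v ∈ s
    · rw [hmemK₀]
      rcases hf.mem_filter_v hsK hvs with hq | hq | hq <;> tauto
    · set e := t ∩ s with he
      have hes : e ⊆ s := Finset.inter_subset_right
      have het : e ⊆ t := Finset.inter_subset_left
      have hve : v ∉ e := fun hq => hvs (hes hq)
      have hecases : e = {a, b} ∨ e = {b, c} ∨ e = {c, a} := by
        rw [hmemK₀] at htK₀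
        rcases htK₀ with rfl | rfl | rfl | rfl
        · exact hf.edge_cases htK (by simp) het hcard hve
        · exact hf.edge_cases htK (by simp) het hcard hve
        · exact hf.edge_cases htK (by simp) het hcard hve
        · exact pairs_of_triple het hcard |>.imp id (Or.imp id (fun hq => by
            rw [hq]; ext r; simp; tauto))
      rw [hmemK₀]
      rcases hecases with hq | hq | hq
      · have hsub : ({a, b} : Finset ℕ) ⊆ s := by rw [← hq]; exact hes
        rcases habs a b c hf hL s hsK hsub with hq' | hq' <;> tauto
      · have hL' : ({b,c,a} : Finset ℕ) ∈ K := by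
          have he' : ({b,c,a} : Finset ℕ) = {a,b,c} := by ext r; simp; tauto
          rw [he']; exact hL
        have hsub : ({b, c} : Finset ℕ) ⊆ s := by rw [← hq]; exact hes
        rcases habs b c a hf.cycle hL' s hsK hsub with hq' | hq'
        · tauto
        · right; right; right
          rw [hq']; ext r; simp; tauto
      · have hL' : ({c,a,b} : Finset ℕ) ∈ K := by
          have he' : ({c,a,b} : Finset ℕ) = {a,b,c} := by ext r; simp; tauto
          rw [he']; exact hL
        have hsub : ({c, a} : Finset ℕ) ⊆ s := by rw [← hq]; exact hes
        rcases habs c a b hf.cycle.cycle hL' s hsK hsub with hq' | hq'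
        · right; right; left
          rw [hq']
        · right; right; right
          rw [hq']; ext r; simp; tauto
  have hKeq : K = K₀ := by
    refine Finset.Subset.antisymm ?_ hK₀K
    intro s hs
    have hpath := h.1.conn {v,a,b} hf.t1_mem s hs
    clear hs
    induction hpath with
    | refl => rw [hmemK₀]; tauto
    | tail _ hstep ih => exact hclosed _ _ ih hstep
  -- build the isomorphism with the tetrahedron
  apply hK
  have hvertF : vertices K ⊆ {v, a, b, c} := by
    intro q hq
    simp only [vertices, Finset.mem_biUnion, id_eq] at hq
    obtain ⟨t, htK, hqt⟩ := hq
    rw [hKeq, hmemK₀] at htK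
    simp only [Finset.mem_insert, Finset.mem_singleton]
    rcases htK with rfl | rfl | rfl | rfl <;> simp at hqt <;> tauto
  set f : ℕ → ℕ := fun x => if x = v then 1 else if x = a then 2 else
    if x = b then 3 else 4 with hfdef
  have fv : f v = 1 := by simp [hfdef]
  have fa : f a = 2 := by simp [hfdef, Ne.symm hva]
  have fb : f b = 3 := by simp [hfdef, Ne.symm hvb, Ne.symm hab]
  have fc : f c = 4 := by simp [hfdef, Ne.symm hvc, Ne.symm hac, Ne.symm hbc]
  refine ⟨f, ?_, ?_⟩
  · intro x hx y hy hxy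
    have hx' : x = v ∨ x = a ∨ x = b ∨ x = c := by
      have := hvertF hx; simp at this; tauto
    have hy' : y = v ∨ y = a ∨ y = b ∨ y = c := by
      have := hvertF hy; simp at this; tauto
    rcases hx' with rfl | rfl | rfl | rfl <;> rcases hy' with rfl | rfl | rfl | rfl <;>
      first
        | rfl
        | (simp only [fv, fa, fb, fc] at hxy; omega)
  · rw [hKeq, hK₀]
    simp only [Finset.image_insert, Finset.image_singleton, fv, fa, fb, fc]
    decide

lemma FanAt.mem_invT {K : Complex} {v a b c : ℕ} (hf : FanAt K v a b c) {t : Finset ℕ} :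
    t ∈ invT K v ↔ t = {a, b, c} ∨ (t ∈ K ∧ v ∉ t) := by
  rw [invT, hf.linkV_eq, Finset.mem_insert, Finset.mem_filter]

lemma FanAt.L_mem_invT {K : Complex} {v a b c : ℕ} (hf : FanAt K v a b c) :
    ({a, b, c} : Finset ℕ) ∈ invT K v := hf.mem_invT.mpr (Or.inl rfl)

lemma FanAt.pair_sub_fan {K : Complex} {v a b c : ℕ} (hf : FanAt K v a b c) {e : Finset ℕ}
    (he : e = {a, b} ∨ e = {b, c} ∨ e = {c, a}) : e ∈ edges K := by
  rcases he with rfl | rfl | rfl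
  · exact mem_edges_iff.mpr ⟨{v,a,b}, hf.t1_mem, by intro q hq; simp at hq; simp; tauto,
      card_pair hf.hab⟩
  · exact mem_edges_iff.mpr ⟨{v,b,c}, hf.cycle.t1_mem, by intro q hq; simp at hq; simp; tauto,
      card_pair hf.hbc⟩
  · exact mem_edges_iff.mpr ⟨{v,c,a}, hf.cycle.cycle.t1_mem,
      by intro q hq; simp at hq; simp; tauto, card_pair (Ne.symm hf.hac)⟩

lemma FanAt.edges_invT {K : Complex} {v a b c : ℕ} (hf : FanAt K v a b c) :
    edges (invT K v) = (edges K).filter (fun e => v ∉ e) := by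
  ext e
  rw [Finset.mem_filter, mem_edges_iff, mem_edges_iff]
  constructor
  · rintro ⟨t, htm, hsub, h2⟩
    rcases hf.mem_invT.mp htm with rfl | ⟨htK, hvt⟩
    · have hve : v ∉ e := fun hq => hf.v_not_L (hsub hq)
      exact ⟨mem_edges_iff.mp (hf.pair_sub_fan ((pairs_of_triple hsub h2).imp id (Or.imp id (fun hq => by
        rw [hq]; ext r; simp; tauto)))), hve⟩
    · exact ⟨⟨t, htK, hsub, h2⟩, fun hq => hvt (hsub hq)⟩
  · rintro ⟨⟨t, htK, hsub, h2⟩, hve⟩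
    by_cases hvt : v ∈ t
    · refine ⟨{a,b,c}, hf.L_mem_invT, ?_, h2⟩
      rcases hf.edge_cases htK hvt hsub h2 hve with rfl | rfl | rfl <;>
        (intro q hq; simp at hq; simp; tauto)
    · exact ⟨t, hf.mem_invT.mpr (Or.inr ⟨htK, hvt⟩), hsub, h2⟩

lemma FanAt.count_ab {K : Complex} {v a b c : ℕ} (h : IsClosedSurface K)
    (hf : FanAt K v a b c) (hL : ({a, b, c} : Finset ℕ) ∉ K) :
    ((invT K v).filter (fun t => ({a, b} : Finset ℕ) ⊆ t)).card = 2 := by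
  obtain ⟨s, hsK, hvs, hssub, hflt⟩ := hf.outer h
  have hLs : ({a,b,c} : Finset ℕ) ≠ s := fun hq => hL (hq ▸ hsK)
  have : (invT K v).filter (fun t => ({a, b} : Finset ℕ) ⊆ t) = {{a,b,c}, s} := by
    ext t
    rw [Finset.mem_filter, hf.mem_invT]
    simp only [Finset.mem_insert, Finset.mem_singleton]
    constructor
    · rintro ⟨rfl | ⟨htK, hvt⟩, hsub⟩
      · exact Or.inl rfl
      · have : t ∈ K.filter (fun t => ({a, b} : Finset ℕ) ⊆ t) :=
          Finset.mem_filter.mpr ⟨htK, hsub⟩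
        rw [hflt] at this
        simp only [Finset.mem_insert, Finset.mem_singleton] at this
        rcases this with rfl | rfl
        · exact absurd (by simp) hvt
        · exact Or.inr rfl
    · rintro (rfl | rfl)
      · exact ⟨Or.inl rfl, by intro q hq; simp at hq; simp; tauto⟩
      · exact ⟨Or.inr ⟨hsK, hvs⟩, hssub⟩
  rw [this]
  exact card_pair hLs

lemma FanAt.invT_edge_two {K : Complex} {v a b c : ℕ} (h : IsClosedSurface K)
    (hf : FanAt K v a b c) (hL : ({a, b, c} : Finset ℕ) ∉ K) :
    ∀ e ∈ edges (invT K v), ((invT K v).filter (fun t => e ⊆ t)).card = 2 := by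
  have hcab : ({c,a,b} : Finset ℕ) = {a,b,c} := by ext r; simp; tauto
  have hbca : ({b,c,a} : Finset ℕ) = {a,b,c} := by ext r; simp; tauto
  intro e he
  rw [hf.edges_invT, Finset.mem_filter] at he
  obtain ⟨heK, hve⟩ := he
  obtain ⟨t, htK, hsub, h2⟩ := mem_edges_iff.mp heK
  by_cases hsubL : e ⊆ ({a, b, c} : Finset ℕ)
  · rcases pairs_of_triple hsubL h2 with rfl | rfl | rfl
    · exact hf.count_ab h hL
    · have := hf.cycle.count_ab h (by rw [hbca]; exact hL)
      rwa [show invT K v = invT K v from rfl] at this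
    · have := hf.cycle.cycle.count_ab h (by rw [hcab]; exact hL)
      have hswap : ({c, a} : Finset ℕ) = {a, c} := by ext r; simp; tauto
      rwa [hswap] at this
  · have heq : (invT K v).filter (fun t => e ⊆ t) = K.filter (fun t => e ⊆ t) := by
      ext s
      rw [Finset.mem_filter, Finset.mem_filter, hf.mem_invT]
      constructor
      · rintro ⟨rfl | ⟨hsK, hvs⟩, hsub'⟩
        · exact absurd hsub' hsubL
        · exact ⟨hsK, hsub'⟩
      · rintro ⟨hsK, hsub'⟩
        refine ⟨Or.inr ⟨hsK, ?_⟩, hsub'⟩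
        intro hvs
        rcases hf.edge_cases hsK hvs hsub' h2 hve with rfl | rfl | rfl <;>
          exact hsubL (by intro q hq; simp at hq; simp; tauto)
    rw [heq]
    exact h.2 e heK

set_option maxHeartbeats 1000000 in
lemma FanAt.invT_closed {K : Complex} {v a b c : ℕ} (h : IsClosedSurface K)
    (hf : FanAt K v a b c) (hL : ({a, b, c} : Finset ℕ) ∉ K) :
    IsClosedSurface (invT K v) := by
  have hLcard : ({a,b,c} : Finset ℕ).card = 3 := card_triple hf.hab hf.hbc hf.hac
  -- intersection transfer
  have hkey : ∀ s ∈ K, ∀ s' ∈ K, v ∈ s → v ∉ s' → (s ∩ s').card = 2 →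
      s ∩ s' ⊆ ({a,b,c} : Finset ℕ) ∧ (({a,b,c} : Finset ℕ) ∩ s').card = 2 := by
    intro s hsK s' hs'K hvs hvs' hcard
    have hes : s ∩ s' ⊆ s := Finset.inter_subset_left
    have hes' : s ∩ s' ⊆ s' := Finset.inter_subset_right
    have hve : v ∉ s ∩ s' := fun hq => hvs' (hes' hq)
    have hsubL : s ∩ s' ⊆ ({a,b,c} : Finset ℕ) := by
      rcases hf.edge_cases hsK hvs hes hcard hve with hq | hq | hq <;>
        (rw [hq]; intro q hq'; simp at hq'; simp; tauto)
    refine ⟨hsubL, ?_⟩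
    have h2le : 2 ≤ (({a,b,c} : Finset ℕ) ∩ s').card := by
      rw [← hcard]
      exact Finset.card_le_card (Finset.subset_inter hsubL hes')
    have h3le : (({a,b,c} : Finset ℕ) ∩ s').card ≤ 3 := by
      rw [← hLcard]
      exact Finset.card_le_card Finset.inter_subset_left
    have hne3 : (({a,b,c} : Finset ℕ) ∩ s').card ≠ 3 := by
      intro hq
      have hsub3 : ({a,b,c} : Finset ℕ) ⊆ ({a,b,c} : Finset ℕ) ∩ s' :=
        Finset.subset_inter (by rfl) (by
          have := Finset.eq_of_subset_of_card_le (Finset.inter_subset_left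
            (s₁ := ({a,b,c} : Finset ℕ)) (s₂ := s')) (by omega)
          intro q hq'
          rw [← this] at hq'
          exact Finset.inter_subset_right hq')
      have hLs' : ({a,b,c} : Finset ℕ) ⊆ s' := fun q hq' =>
        Finset.inter_subset_right (hsub3 hq')
      have : ({a,b,c} : Finset ℕ) = s' :=
        Finset.eq_of_subset_of_card_le hLs' (by rw [hLcard, h.1.card3 s' hs'K])
      exact hL (this ▸ hs'K)
    omega
  have hmemK' : ∀ s ∈ K, v ∉ s → s ∈ invT K v := fun s hs hv =>
    hf.mem_invT.mpr (Or.inr ⟨hs, hv⟩)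
  -- the projection
  set π : Finset ℕ → Finset ℕ := fun t => if v ∈ t then {a,b,c} else t with hπ
  have hπfan : ∀ s, v ∈ s → π s = {a,b,c} := by intro s hs; simp [hπ, hs]
  have hπold : ∀ s, v ∉ s → π s = s := by intro s hs; simp [hπ, hs]
  constructor
  constructor
  · exact ⟨{a,b,c}, hf.L_mem_invT⟩
  · intro t ht
    rcases hf.mem_invT.mp ht with rfl | ⟨htK, _⟩
    · exact hLcard
    · exact h.1.card3 t htK
  · intro e he
    exact le_of_eq (hf.invT_edge_two h hL e he)
  · -- link connectivity
    intro w t ht t' ht' hwt hwt'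
    have hstep : ∀ s s', adjAt K w s s' →
        Relation.ReflTransGen (adjAt (invT K v) w) (π s) (π s') := by
      rintro s s' ⟨hsK, hs'K, hws, hws', hcard⟩
      by_cases h1 : v ∈ s <;> by_cases h2 : v ∈ s'
      · rw [hπfan s h1, hπfan s' h2]
      · obtain ⟨hsubL, hcap⟩ := hkey s hsK s' hs'K h1 h2 hcard
        rw [hπfan s h1, hπold s' h2]
        refine Relation.ReflTransGen.single
          ⟨hf.L_mem_invT, hmemK' s' hs'K h2, ?_, hws', hcap⟩
        exact hsubL (Finset.mem_inter.mpr ⟨hws, hws'⟩)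
      · obtain ⟨hsubL, hcap⟩ := hkey s' hs'K s hsK h2 h1
          (by rw [Finset.inter_comm]; exact hcard)
        rw [hπfan s' h2, hπold s h1]
        refine Relation.ReflTransGen.single
          ⟨hmemK' s hsK h1, hf.L_mem_invT, hws, ?_, by rw [Finset.inter_comm]; exact hcap⟩
        exact hsubL (Finset.mem_inter.mpr ⟨hws', hws⟩)
      · rw [hπold s h1, hπold s' h2]
        exact Relation.ReflTransGen.single
          ⟨hmemK' s hsK h1, hmemK' s' hs'K h2, hws, hws', hcard⟩
    have hpre : ∀ t ∈ invT K v, w ∈ t → ∃ rt, rt ∈ K ∧ w ∈ rt ∧ π rt = t := by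
      intro t htm hwtm
      rcases hf.mem_invT.mp htm with rfl | ⟨htK, hvt⟩
      · have : w = a ∨ w = b ∨ w = c := by simpa using hwtm
        rcases this with rfl | rfl | rfl
        · exact ⟨{v,w,b}, hf.t1_mem, by simp, hπfan _ (by simp)⟩
        · exact ⟨{v,a,w}, hf.t1_mem, by simp, hπfan _ (by simp)⟩
        · exact ⟨{v,b,w}, hf.cycle.t1_mem, by simp, hπfan _ (by simp)⟩
      · exact ⟨t, htK, hwtm, hπold t hvt⟩
    obtain ⟨rt, hrtK, hwrt, hπrt⟩ := hpre t ht hwt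
    obtain ⟨rt', hrt'K, hwrt', hπrt'⟩ := hpre t' ht' hwt'
    have := rtg_map π hstep (h.1.link_conn w rt hrtK rt' hrt'K hwrt hwrt')
    rwa [hπrt, hπrt'] at this
  · -- connectivity
    intro t ht t' ht'
    have hstep : ∀ s s', adj K s s' →
        Relation.ReflTransGen (adj (invT K v)) (π s) (π s') := by
      rintro s s' ⟨hsK, hs'K, hcard⟩
      by_cases h1 : v ∈ s <;> by_cases h2 : v ∈ s'
      · rw [hπfan s h1, hπfan s' h2]
      · obtain ⟨hsubL, hcap⟩ := hkey s hsK s' hs'K h1 h2 hcard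
        rw [hπfan s h1, hπold s' h2]
        exact Relation.ReflTransGen.single ⟨hf.L_mem_invT, hmemK' s' hs'K h2, hcap⟩
      · obtain ⟨hsubL, hcap⟩ := hkey s' hs'K s hsK h2 h1
          (by rw [Finset.inter_comm]; exact hcard)
        rw [hπfan s' h2, hπold s h1]
        exact Relation.ReflTransGen.single ⟨hmemK' s hsK h1, hf.L_mem_invT,
          by rw [Finset.inter_comm]; exact hcap⟩
      · rw [hπold s h1, hπold s' h2]
        exact Relation.ReflTransGen.single ⟨hmemK' s hsK h1, hmemK' s' hs'K h2, hcard⟩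
    have hpre : ∀ t ∈ invT K v, ∃ rt, rt ∈ K ∧ π rt = t := by
      intro t htm
      rcases hf.mem_invT.mp htm with rfl | ⟨htK, hvt⟩
      · exact ⟨{v,a,b}, hf.t1_mem, hπfan _ (by simp)⟩
      · exact ⟨t, htK, hπold t hvt⟩
    obtain ⟨rt, hrtK, hπrt⟩ := hpre t ht
    obtain ⟨rt', hrt'K, hπrt'⟩ := hpre t' ht'
    have := rtg_map π hstep (h.1.conn rt hrtK rt' hrt'K)
    rwa [hπrt, hπrt'] at this
  · exact hf.invT_edge_two h hL

lemma FanAt.vertices_invT {K : Complex} {v a b c : ℕ} (hf : FanAt K v a b c) :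
    vertices (invT K v) = (vertices K).erase v := by
  ext q
  simp only [vertices, Finset.mem_erase, Finset.mem_biUnion, id_eq]
  constructor
  · rintro ⟨t, htm, hqt⟩
    rcases hf.mem_invT.mp htm with rfl | ⟨htK, hvt⟩
    · have hq3 : q = a ∨ q = b ∨ q = c := by simpa using hqt
      constructor
      · rintro rfl; exact hf.v_not_L hqt
      · rcases hq3 with rfl | rfl | rfl
        · exact ⟨{v,q,b}, hf.t1_mem, by simp⟩
        · exact ⟨{v,a,q}, hf.t1_mem, by simp⟩
        · exact ⟨{v,b,q}, hf.cycle.t1_mem, by simp⟩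
    · exact ⟨fun hq => hvt (hq ▸ hqt), t, htK, hqt⟩
  · rintro ⟨hqv, t, htK, hqt⟩
    by_cases hvt : v ∈ t
    · refine ⟨{a,b,c}, hf.L_mem_invT, ?_⟩
      rcases hf.mem_filter_v htK hvt with rfl | rfl | rfl <;> simp at hqt <;> simp <;> tauto
    · exact ⟨t, hf.mem_invT.mpr (Or.inr ⟨htK, hvt⟩), hqt⟩

lemma FanAt.edges_v_eq {K : Complex} {v a b c : ℕ} (hf : FanAt K v a b c) :
    (edges K).filter (fun e => v ∈ e) = {{v,a},{v,b},{v,c}} := by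
  ext e
  rw [Finset.mem_filter]
  simp only [Finset.mem_insert, Finset.mem_singleton]
  constructor
  · rintro ⟨heK, hve⟩
    obtain ⟨t, htK, hsub, h2⟩ := mem_edges_iff.mp heK
    have hvt : v ∈ t := hsub hve
    rcases hf.mem_filter_v htK hvt with rfl | rfl | rfl
    · rcases pairs_of_triple hsub h2 with rfl | rfl | rfl
      · tauto
      · exact absurd hve (by simp [hf.hva, hf.hvb])
      · tauto
    · rcases pairs_of_triple hsub h2 with rfl | rfl | rfl
      · tauto
      · exact absurd hve (by simp [hf.hvb, hf.hvc])
      · tauto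
    · rcases pairs_of_triple hsub h2 with rfl | rfl | rfl
      · tauto
      · exact absurd hve (by simp [hf.hvc, hf.hva])
      · tauto
  · rintro (rfl | rfl | rfl)
    · exact ⟨mem_edges_iff.mpr ⟨{v,a,b}, hf.t1_mem, by intro q hq; simp at hq; simp; tauto,
        card_pair hf.hva⟩, by simp⟩
    · exact ⟨mem_edges_iff.mpr ⟨{v,a,b}, hf.t1_mem, by intro q hq; simp at hq; simp; tauto,
        card_pair hf.hvb⟩, by simp⟩
    · exact ⟨mem_edges_iff.mpr ⟨{v,b,c}, hf.cycle.t1_mem,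
        by intro q hq; simp at hq; simp; tauto, card_pair hf.hvc⟩, by simp⟩

lemma FanAt.euler_invT {K : Complex} {v a b c : ℕ} (h : IsClosedSurface K)
    (hf : FanAt K v a b c) (hL : ({a, b, c} : Finset ℕ) ∉ K) (hv : v ∈ vertices K) :
    eulerChar (invT K v) = eulerChar K := by
  have hV : (vertices K).card = (vertices (invT K v)).card + 1 := by
    rw [hf.vertices_invT, Finset.card_erase_of_mem hv]
    have : 1 ≤ (vertices K).card := Finset.card_pos.mpr ⟨v, hv⟩
    omega
  have hEdges : (edges K).card = (edges (invT K v)).card + 3 := by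
    have hsplit := Finset.card_filter_add_card_filter_not
      (s := edges K) (p := fun e => v ∈ e)
    have h3 : ((edges K).filter (fun e => v ∈ e)).card = 3 := by
      rw [hf.edges_v_eq]
      refine card_triple ?_ ?_ ?_
      · intro hq
        have : a ∈ ({v,b} : Finset ℕ) := hq ▸ (by simp)
        simp at this
        rcases this with h' | h'
        · exact hf.hva h'.symm
        · exact hf.hab h'
      · intro hq
        have : b ∈ ({v,c} : Finset ℕ) := hq ▸ (by simp)
        simp at this
        rcases this with h' | h'
        · exact hf.hvb h'.symm
        · exact hf.hbc h'
      · intro hq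
        have : a ∈ ({v,c} : Finset ℕ) := hq ▸ (by simp)
        simp at this
        rcases this with h' | h'
        · exact hf.hva h'.symm
        · exact hf.hac h'
    rw [hf.edges_invT]
    omega
  have hT : K.card = (invT K v).card + 2 := by
    have hsplit := Finset.card_filter_add_card_filter_not
      (s := K) (p := fun t => v ∈ t)
    have h3 : (K.filter (fun t => v ∈ t)).card = 3 := by
      rw [hf.hF]
      refine card_triple ?_ ?_ ?_
      · intro hq
        have : a ∈ ({v,b,c} : Finset ℕ) := hq ▸ (by simp)
        simp at this
        rcases this with h' | h' | h'
        · exact hf.hva h'.symm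
        · exact hf.hab h'
        · exact hf.hac h'
      · intro hq
        have : b ∈ ({v,c,a} : Finset ℕ) := hq ▸ (by simp)
        simp at this
        rcases this with h' | h' | h'
        · exact hf.hvb h'.symm
        · exact hf.hbc h'
        · exact hf.hab h'.symm
      · intro hq
        have : b ∈ ({v,c,a} : Finset ℕ) := hq ▸ (by simp)
        simp at this
        rcases this with h' | h' | h'
        · exact hf.hvb h'.symm
        · exact hf.hbc h'
        · exact hf.hab h'.symm
    have hLf : ({a,b,c} : Finset ℕ) ∉ K.filter (fun t => v ∉ t) := by
      intro hq
      exact hL (Finset.mem_filter.mp hq).1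
    have hins : (invT K v).card = (K.filter (fun t => v ∉ t)).card + 1 := by
      rw [invT, hf.linkV_eq, Finset.card_insert_of_notMem hLf]
    omega
  simp only [eulerChar]
  omega

lemma FanAt.t12_ne {K : Complex} {v a b c : ℕ} (hf : FanAt K v a b c) :
    ({v,a,b} : Finset ℕ) ≠ {v,b,c} := by
  intro hq
  have : a ∈ ({v,b,c} : Finset ℕ) := hq ▸ (by simp)
  simp at this
  rcases this with h' | h' | h'
  · exact hf.hva h'.symm
  · exact hf.hab h'
  · exact hf.hac h'

lemma FanAt.t23_ne {K : Complex} {v a b c : ℕ} (hf : FanAt K v a b c) :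
    ({v,b,c} : Finset ℕ) ≠ {v,c,a} := by
  intro hq
  have : b ∈ ({v,c,a} : Finset ℕ) := hq ▸ (by simp)
  simp at this
  rcases this with h' | h' | h'
  · exact hf.hvb h'.symm
  · exact hf.hbc h'
  · exact hf.hab h'.symm

lemma FanAt.t13_ne {K : Complex} {v a b c : ℕ} (hf : FanAt K v a b c) :
    ({v,a,b} : Finset ℕ) ≠ {v,c,a} := by
  intro hq
  have : b ∈ ({v,c,a} : Finset ℕ) := hq ▸ (by simp)
  simp at this
  rcases this with h' | h' | h'
  · exact hf.hvb h'.symm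
  · exact hf.hbc h'
  · exact hf.hab h'.symm

/-- Gluing an orientation of `K` together with a compatible cyclic order on the
link into an orientation of `invT K v`. -/
lemma FanAt.orient_glue_invT {K : Complex} {v a b c : ℕ}
    (hf : FanAt K v a b c) (hL : ({a, b, c} : Finset ℕ) ∉ K)
    (o : Finset ℕ → ℕ × ℕ × ℕ)
    (ho1 : ∀ t ∈ K, ({(o t).1, (o t).2.1, (o t).2.2} : Finset ℕ) = t)
    (ho2 : ∀ t₁ ∈ K, ∀ t₂ ∈ K, t₁ ≠ t₂ → ∀ p ∈ dedges (o t₁), p ∉ dedges (o t₂))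
    (q : ℕ × ℕ × ℕ) (hq : ({q.1, q.2.1, q.2.2} : Finset ℕ) = {a, b, c})
    (hcov : ∀ p ∈ dedges q,
      p ∈ dedges (o {v,a,b}) ∨ p ∈ dedges (o {v,b,c}) ∨ p ∈ dedges (o {v,c,a})) :
    Orientable (invT K v) := by
  set o' : Finset ℕ → ℕ × ℕ × ℕ :=
    fun t => if t = ({a,b,c} : Finset ℕ) then q else o t with ho'
  have hvL : o' {a,b,c} = q := by rw [ho']; simp
  have hvold : ∀ t ∈ K, o' t = o t := by
    intro t htK
    rw [ho']
    simp only
    rw [if_neg (show ¬ t = ({a,b,c} : Finset ℕ) from fun hq' => hL (hq' ▸ htK))]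
  refine ⟨o', ?_, ?_⟩
  · intro t htm
    rcases hf.mem_invT.mp htm with rfl | ⟨htK, hvt⟩
    · rw [hvL]; exact hq
    · rw [hvold t htK]; exact ho1 t htK
  · have hLold : ∀ s ∈ K, v ∉ s → ∀ p ∈ dedges q, p ∉ dedges (o s) := by
      intro s hsK hvs p hp hp'
      rcases hcov p hp with h' | h' | h'
      · exact ho2 _ hf.t1_mem s hsK (fun hq' => hvs (hq' ▸ (by simp))) p h' hp'
      · exact ho2 _ hf.cycle.t1_mem s hsK (fun hq' => hvs (hq' ▸ (by simp))) p h' hp'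
      · exact ho2 _ hf.cycle.cycle.t1_mem s hsK (fun hq' => hvs (hq' ▸ (by simp))) p h' hp'
    intro t htm t' ht'm hne p hp hp'
    rcases hf.mem_invT.mp htm with rfl | ⟨htK, hvt⟩ <;>
      rcases hf.mem_invT.mp ht'm with h2 | ⟨ht'K, hvt'⟩
    · exact hne h2.symm
    · rw [hvL] at hp
      rw [hvold t' ht'K] at hp'
      exact hLold t' ht'K hvt' p hp hp'
    · subst h2
      rw [hvL] at hp'
      rw [hvold t htK] at hp
      exact hLold t htK hvt p hp' hp
    · rw [hvold t htK] at hp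
      rw [hvold t' ht'K] at hp'
      exact ho2 t htK t' ht'K hne p hp hp'

/-- Gluing an orientation of `invT K v` together with a compatible fan of
orientations around `v` into an orientation of `K`. -/
lemma FanAt.orient_glue_K {K : Complex} {v a b c : ℕ}
    (hf : FanAt K v a b c) (hL : ({a, b, c} : Finset ℕ) ∉ K)
    (o : Finset ℕ → ℕ × ℕ × ℕ)
    (ho1 : ∀ t ∈ invT K v, ({(o t).1, (o t).2.1, (o t).2.2} : Finset ℕ) = t)
    (ho2 : ∀ t₁ ∈ invT K v, ∀ t₂ ∈ invT K v, t₁ ≠ t₂ →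
      ∀ p ∈ dedges (o t₁), p ∉ dedges (o t₂))
    (q₁ q₂ q₃ : ℕ × ℕ × ℕ)
    (hq1 : ({q₁.1, q₁.2.1, q₁.2.2} : Finset ℕ) = {v,a,b})
    (hq2 : ({q₂.1, q₂.2.1, q₂.2.2} : Finset ℕ) = {v,b,c})
    (hq3 : ({q₃.1, q₃.2.1, q₃.2.2} : Finset ℕ) = {v,c,a})
    (d12 : ∀ p ∈ dedges q₁, p ∉ dedges q₂)
    (d13 : ∀ p ∈ dedges q₁, p ∉ dedges q₃)
    (d23 : ∀ p ∈ dedges q₂, p ∉ dedges q₃)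
    (hcov1 : ∀ p ∈ dedges q₁, p.1 = v ∨ p.2 = v ∨ p ∈ dedges (o {a,b,c}))
    (hcov2 : ∀ p ∈ dedges q₂, p.1 = v ∨ p.2 = v ∨ p ∈ dedges (o {a,b,c}))
    (hcov3 : ∀ p ∈ dedges q₃, p.1 = v ∨ p.2 = v ∨ p ∈ dedges (o {a,b,c})) :
    Orientable K := by
  have h12 := hf.t12_ne
  have h23 := hf.t23_ne
  have h13 := hf.t13_ne
  set oK : Finset ℕ → ℕ × ℕ × ℕ := fun t =>
    if t = ({v,a,b} : Finset ℕ) then q₁ else if t = ({v,b,c} : Finset ℕ) then q₂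
    else if t = ({v,c,a} : Finset ℕ) then q₃ else o t with hoK
  have hv1 : oK {v,a,b} = q₁ := by rw [hoK]; simp
  have hv2 : oK {v,b,c} = q₂ := by rw [hoK]; simp only [if_neg (Ne.symm h12)]; simp
  have hv3 : oK {v,c,a} = q₃ := by
    rw [hoK]; simp only [if_neg (Ne.symm h13), if_neg (Ne.symm h23)]; simp
  have hvold : ∀ t, v ∉ t → oK t = o t := by
    intro t hvt
    rw [hoK]
    simp only
    rw [if_neg (show ¬ t = ({v,a,b} : Finset ℕ) from
        fun hq' => hvt (by rw [hq']; simp)),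
      if_neg (show ¬ t = ({v,b,c} : Finset ℕ) from
        fun hq' => hvt (by rw [hq']; simp)),
      if_neg (show ¬ t = ({v,c,a} : Finset ℕ) from
        fun hq' => hvt (by rw [hq']; simp))]
  have hmemK' : ∀ s ∈ K, v ∉ s → s ∈ invT K v := fun s hs hv =>
    hf.mem_invT.mpr (Or.inr ⟨hs, hv⟩)
  have hLne : ∀ s ∈ K, ({a,b,c} : Finset ℕ) ≠ s := fun s hs hq => hL (hq ▸ hs)
  have hvnot : ∀ s ∈ K, v ∉ s → ∀ p ∈ dedges (o s), p.1 ≠ v ∧ p.2 ≠ v := by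
    intro s hsK hvs p hp
    have hm := mem_dedges_fst hp
    rw [ho1 s (hmemK' s hsK hvs)] at hm
    exact ⟨fun hq' => hvs (hq' ▸ hm.1), fun hq' => hvs (hq' ▸ hm.2)⟩
  -- a fan orientation never clashes with an old triangle
  have hfo : ∀ q' : ℕ × ℕ × ℕ,
      (∀ p ∈ dedges q', p.1 = v ∨ p.2 = v ∨ p ∈ dedges (o {a,b,c})) →
      ∀ s ∈ K, v ∉ s → ∀ p ∈ dedges q', p ∉ dedges (o s) := by
    intro q' hcov s hsK hvs p hp hp'
    rcases hcov p hp with h' | h' | h'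
    · exact (hvnot s hsK hvs p hp').1 h'
    · exact (hvnot s hsK hvs p hp').2 h'
    · exact ho2 _ hf.L_mem_invT s (hmemK' s hsK hvs) (hLne s hsK) p h' hp'
  have hclass : ∀ t ∈ K, t = ({v,a,b} : Finset ℕ) ∨ t = {v,b,c} ∨ t = {v,c,a} ∨ v ∉ t := by
    intro t htK
    by_cases hvt : v ∈ t
    · rcases hf.mem_filter_v htK hvt with hq' | hq' | hq' <;> tauto
    · tauto
  refine ⟨oK, ?_, ?_⟩
  · intro t htK
    rcases hclass t htK with rfl | rfl | rfl | hvt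
    · rw [hv1]; exact hq1
    · rw [hv2]; exact hq2
    · rw [hv3]; exact hq3
    · rw [hvold t hvt]; exact ho1 t (hmemK' t htK hvt)
  · intro t htK t' ht'K hne
    have flip : ∀ (x y : ℕ × ℕ × ℕ), (∀ p ∈ dedges x, p ∉ dedges y) →
        ∀ p ∈ dedges y, p ∉ dedges x := fun x y hd p hp hp' => hd p hp' hp
    rcases hclass t htK with rfl | rfl | rfl | hvt <;>
      rcases hclass t' ht'K with rfl | rfl | rfl | hvt'
    · exact absurd rfl hne
    · rw [hv1, hv2]; exact d12
    · rw [hv1, hv3]; exact d13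
    · rw [hv1, hvold t' hvt']; exact hfo q₁ hcov1 t' ht'K hvt'
    · rw [hv2, hv1]; exact flip _ _ d12
    · exact absurd rfl hne
    · rw [hv2, hv3]; exact d23
    · rw [hv2, hvold t' hvt']; exact hfo q₂ hcov2 t' ht'K hvt'
    · rw [hv3, hv1]; exact flip _ _ d13
    · rw [hv3, hv2]; exact flip _ _ d23
    · exact absurd rfl hne
    · rw [hv3, hvold t' hvt']; exact hfo q₃ hcov3 t' ht'K hvt'
    · rw [hvold t hvt, hv1]; exact flip _ _ (hfo q₁ hcov1 t htK hvt)
    · rw [hvold t hvt, hv2]; exact flip _ _ (hfo q₂ hcov2 t htK hvt)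
    · rw [hvold t hvt, hv3]; exact flip _ _ (hfo q₃ hcov3 t htK hvt)
    · rw [hvold t hvt, hvold t' hvt']
      exact ho2 t (hmemK' t htK hvt) t' (hmemK' t' ht'K hvt') hne

lemma FanAt.orient_fwd {K : Complex} {v a b c : ℕ} (hf : FanAt K v a b c)
    (hL : ({a, b, c} : Finset ℕ) ∉ K) (ho : Orientable K) : Orientable (invT K v) := by
  obtain ⟨o, ho1, ho2⟩ := ho
  have hm1 := hf.t1_mem
  have hm2 := hf.cycle.t1_mem
  have hm3 := hf.cycle.cycle.t1_mem
  have hm2' : ({v,b,c} : Finset ℕ) ∈ K := hm2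
  have hm3' : ({v,c,a} : Finset ℕ) ∈ K := hm3
  have d1 := orient_cases hf.hva hf.hab hf.hvb (o {v,a,b}) (ho1 _ hm1)
  have d2 := orient_cases hf.hvb hf.hbc hf.hvc (o {v,b,c}) (ho1 _ hm2')
  have d3 := orient_cases hf.hvc (Ne.symm hf.hac) hf.hva (o {v,c,a}) (ho1 _ hm3')
  have hco12 := ho2 _ hm1 _ hm2' hf.t12_ne
  have hco13 := ho2 _ hm1 _ hm3' hf.t13_ne
  rcases d1 with hd1 | hd1 <;> rcases d2 with hd2 | hd2 <;> rcases d3 with hd3 | hd3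
  · refine hf.orient_glue_invT hL o ho1 ho2 (a, b, c) rfl ?_
    intro p hp
    have hp' : p = (a,b) ∨ p = (b,c) ∨ p = (c,a) := by
      simpa [dedges] using hp
    rcases hp' with rfl | rfl | rfl
    · left; rw [hd1]; simp
    · right; left; rw [hd2]; simp
    · right; right; rw [hd3]; simp
  · exact absurd (by rw [hd3]; simp : ((v,a) : ℕ × ℕ) ∈ dedges (o {v,c,a}))
      (hco13 (v,a) (by rw [hd1]; simp))
  · exact absurd (by rw [hd2]; simp : ((b,v) : ℕ × ℕ) ∈ dedges (o {v,b,c}))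
      (hco12 (b,v) (by rw [hd1]; simp))
  · exact absurd (by rw [hd2]; simp : ((b,v) : ℕ × ℕ) ∈ dedges (o {v,b,c}))
      (hco12 (b,v) (by rw [hd1]; simp))
  · exact absurd (by rw [hd2]; simp : ((v,b) : ℕ × ℕ) ∈ dedges (o {v,b,c}))
      (hco12 (v,b) (by rw [hd1]; simp))
  · exact absurd (by rw [hd2]; simp : ((v,b) : ℕ × ℕ) ∈ dedges (o {v,b,c}))
      (hco12 (v,b) (by rw [hd1]; simp))
  · exact absurd (by rw [hd3]; simp : ((a,v) : ℕ × ℕ) ∈ dedges (o {v,c,a}))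
      (hco13 (a,v) (by rw [hd1]; simp))
  · refine hf.orient_glue_invT hL o ho1 ho2 (a, c, b) (by ext r; simp; tauto) ?_
    intro p hp
    have hp' : p = (a,c) ∨ p = (c,b) ∨ p = (b,a) := by
      simpa [dedges] using hp
    rcases hp' with rfl | rfl | rfl
    · right; right; rw [hd3]; simp
    · right; left; rw [hd2]; simp
    · left; rw [hd1]; simp

lemma FanAt.orient_bwd {K : Complex} {v a b c : ℕ} (hf : FanAt K v a b c)
    (hL : ({a, b, c} : Finset ℕ) ∉ K) (ho : Orientable (invT K v)) : Orientable K := by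
  obtain ⟨o, ho1, ho2⟩ := ho
  have hva := hf.hva; have hvb := hf.hvb; have hvc := hf.hvc
  have hab := hf.hab; have hbc := hf.hbc; have hac := hf.hac
  have dL := orient_cases hab hbc hac (o {a,b,c}) (ho1 _ hf.L_mem_invT)
  rcases dL with hdL | hdL
  · refine hf.orient_glue_K hL o ho1 ho2 (a,b,v) (b,c,v) (c,a,v)
      (by ext r; simp; tauto) (by ext r; simp; tauto) (by ext r; simp; tauto)
      ?_ ?_ ?_ ?_ ?_ ?_
    · intro p hp hp'
      simp only [dedges, Finset.mem_insert, Finset.mem_singleton] at hp hp'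
      rcases hp with rfl | rfl | rfl <;> simp only [Prod.mk.injEq] at hp' <;> omega
    · intro p hp hp'
      simp only [dedges, Finset.mem_insert, Finset.mem_singleton] at hp hp'
      rcases hp with rfl | rfl | rfl <;> simp only [Prod.mk.injEq] at hp' <;> omega
    · intro p hp hp'
      simp only [dedges, Finset.mem_insert, Finset.mem_singleton] at hp hp'
      rcases hp with rfl | rfl | rfl <;> simp only [Prod.mk.injEq] at hp' <;> omega
    · intro p hp
      have hp' : p = (a,b) ∨ p = (b,v) ∨ p = (v,a) := by simpa [dedges] using hp
      rcases hp' with rfl | rfl | rfl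
      · right; right; rw [hdL]; simp
      · right; left; rfl
      · left; rfl
    · intro p hp
      have hp' : p = (b,c) ∨ p = (c,v) ∨ p = (v,b) := by simpa [dedges] using hp
      rcases hp' with rfl | rfl | rfl
      · right; right; rw [hdL]; simp
      · right; left; rfl
      · left; rfl
    · intro p hp
      have hp' : p = (c,a) ∨ p = (a,v) ∨ p = (v,c) := by simpa [dedges] using hp
      rcases hp' with rfl | rfl | rfl
      · right; right; rw [hdL]; simp
      · right; left; rfl
      · left; rfl
  · refine hf.orient_glue_K hL o ho1 ho2 (b,a,v) (c,b,v) (a,c,v)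
      (by ext r; simp; tauto) (by ext r; simp; tauto) (by ext r; simp; tauto)
      ?_ ?_ ?_ ?_ ?_ ?_
    · intro p hp hp'
      simp only [dedges, Finset.mem_insert, Finset.mem_singleton] at hp hp'
      rcases hp with rfl | rfl | rfl <;> simp only [Prod.mk.injEq] at hp' <;> omega
    · intro p hp hp'
      simp only [dedges, Finset.mem_insert, Finset.mem_singleton] at hp hp'
      rcases hp with rfl | rfl | rfl <;> simp only [Prod.mk.injEq] at hp' <;> omega
    · intro p hp hp'
      simp only [dedges, Finset.mem_insert, Finset.mem_singleton] at hp hp'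
      rcases hp with rfl | rfl | rfl <;> simp only [Prod.mk.injEq] at hp' <;> omega
    · intro p hp
      have hp' : p = (b,a) ∨ p = (a,v) ∨ p = (v,b) := by simpa [dedges] using hp
      rcases hp' with rfl | rfl | rfl
      · right; right; rw [hdL]; simp
      · right; left; rfl
      · left; rfl
    · intro p hp
      have hp' : p = (c,b) ∨ p = (b,v) ∨ p = (v,c) := by simpa [dedges] using hp
      rcases hp' with rfl | rfl | rfl
      · right; right; rw [hdL]; simp
      · right; left; rfl
      · left; rfl
    · intro p hp
      have hp' : p = (a,c) ∨ p = (c,v) ∨ p = (v,a) := by simpa [dedges] using hp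
      rcases hp' with rfl | rfl | rfl
      · right; right; rw [hdL]; simp
      · right; left; rfl
      · left; rfl

end Helpers

/-- in a closed triangulated surface other than the tetrahedron
boundary, the link of a 3-valent vertex does not bound a triangle, hence the
inverse T-move removing it applies (and yields a triangulation of the same
surface). -/
theorem invT_move_applicable (K : Complex) (h : IsClosedSurface K)
    (hK : ¬ Iso K tetra) (v : ℕ) (hv : v ∈ vertices K)
    (h3 : valence K v = 3) :
    linkV K v ∉ K ∧ InvTStep K (invT K v) ∧
      IsClosedSurface (invT K v) ∧ SameSurface (invT K v) K := by
  obtain ⟨a, b, c, hva, hvb, hvc, hab, hbc, hac, hF⟩ := fan h h3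
  have hf : FanAt K v a b c := ⟨hva, hvb, hvc, hab, hbc, hac, hF⟩
  have hL : ({a, b, c} : Finset ℕ) ∉ K := hf.link_notMem h hK
  have hlink := hf.linkV_eq
  refine ⟨by rw [hlink]; exact hL, ⟨v, h3, by rw [hlink]; exact hL, rfl⟩,
    hf.invT_closed h hL, hf.euler_invT h hL hv, hf.orient_bwd hL, hf.orient_fwd hL⟩

end Tri
end

section
/- In a triangulation of a closed surface that is not the boundary of the tetrahedron, any two distinct 3-valent vertices are non-adjacent, and hence their open stars are disjoint. -/
namespace Tri

private lemma exists_other {F : Finset (Finset ℕ)} (h2 : F.card = 2) {a : Finset ℕ}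
    (ha : a ∈ F) : ∃ b, b ∈ F ∧ b ≠ a ∧ F = {a, b} := by
  have hsd : (F \ {a}).card = 1 := by
    rw [Finset.card_sdiff_of_subset (by simpa using ha), h2, Finset.card_singleton]
  obtain ⟨b, hb⟩ := Finset.card_eq_one.mp hsd
  have hbF : b ∈ F \ {a} := hb ▸ Finset.mem_singleton_self b
  obtain ⟨hbF', hba⟩ := Finset.mem_sdiff.mp hbF
  have hba' : b ≠ a := by simpa using hba
  refine ⟨b, hbF', hba', ?_⟩
  apply (Finset.eq_of_subset_of_card_le ?_ ?_).symm
  · intro z hz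
    simp only [Finset.mem_insert, Finset.mem_singleton] at hz
    rcases hz with rfl | rfl <;> assumption
  · rw [h2, Finset.card_insert_of_notMem (by simpa using (Ne.symm hba')),
      Finset.card_singleton]

private lemma exists_third {F : Finset (Finset ℕ)} (h3 : F.card = 3) {a b : Finset ℕ}
    (ha : a ∈ F) (hb : b ∈ F) (hab : a ≠ b) :
    ∃ c, c ∈ F ∧ c ≠ a ∧ c ≠ b ∧ F = {a, b, c} := by
  have hsub : ({a, b} : Finset (Finset ℕ)) ⊆ F := by
    intro z hz
    simp only [Finset.mem_insert, Finset.mem_singleton] at hz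
    rcases hz with rfl | rfl <;> assumption
  have hsd : (F \ {a, b}).card = 1 := by
    rw [Finset.card_sdiff_of_subset hsub, h3,
      Finset.card_insert_of_notMem (by simpa using hab), Finset.card_singleton]
  obtain ⟨c, hc⟩ := Finset.card_eq_one.mp hsd
  have hcF : c ∈ F \ {a, b} := hc ▸ Finset.mem_singleton_self c
  obtain ⟨hcF', hc'⟩ := Finset.mem_sdiff.mp hcF
  simp only [Finset.mem_insert, Finset.mem_singleton, not_or] at hc'
  refine ⟨c, hcF', hc'.1, hc'.2, ?_⟩
  apply (Finset.eq_of_subset_of_card_le ?_ ?_).symm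
  · intro z hz
    simp only [Finset.mem_insert, Finset.mem_singleton] at hz
    rcases hz with rfl | rfl | rfl <;> assumption
  · rw [h3, Finset.card_insert_of_notMem (by simp [hab, Ne.symm hc'.1]),
      Finset.card_insert_of_notMem (by simp [Ne.symm hc'.2]), Finset.card_singleton]

set_option maxHeartbeats 1000000 in
/-- in a non-tetrahedral closed triangulated surface, distinct
3-valent vertices are non-adjacent and their open stars are disjoint. -/
theorem three_valent_nonadjacent (K : Complex) (h : IsClosedSurface K)
    (hK : ¬ Iso K tetra) (v w : ℕ) (hvw : v ≠ w)
    (hv : valence K v = 3) (hw : valence K w = 3) :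
    ({v, w} : Finset ℕ) ∉ edges K ∧ ∀ t ∈ K, ¬ (v ∈ t ∧ w ∈ t) := by
  obtain ⟨hsurf, hedge2⟩ := h
  suffices hmain : ∀ t ∈ K, ¬ (v ∈ t ∧ w ∈ t) by
    refine ⟨fun hvwK => ?_, hmain⟩
    simp only [edges, Finset.mem_biUnion, Finset.mem_powersetCard] at hvwK
    obtain ⟨t, ht, hsub, -⟩ := hvwK
    exact hmain t ht ⟨hsub (by simp), hsub (by simp)⟩
  rintro t ht ⟨hvt, hwt⟩
  apply hK
  have hcard3 := hsurf.card3
  have hmemE : ∀ s ∈ K, ∀ a ∈ s, ∀ b ∈ s, a ≠ b → ({a, b} : Finset ℕ) ∈ edges K := by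
    intro s hs a haa b hbb hab
    refine Finset.mem_biUnion.mpr ⟨s, hs, Finset.mem_powersetCard.mpr ⟨?_, Finset.card_pair hab⟩⟩
    intro z hz
    simp only [Finset.mem_insert, Finset.mem_singleton] at hz
    rcases hz with rfl | rfl <;> assumption
  -- the third vertex of a triangle containing v and w
  have third : ∀ s ∈ K, v ∈ s → w ∈ s → ∃ z, z ∈ s ∧ v ≠ z ∧ w ≠ z ∧ s = {v, w, z} := by
    intro s hsK hvs hws
    have hsub : ({v, w} : Finset ℕ) ⊆ s := by
      intro z hz
      simp only [Finset.mem_insert, Finset.mem_singleton] at hz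
      rcases hz with rfl | rfl <;> assumption
    have hne : (s \ {v, w}).Nonempty := by
      rw [← Finset.card_pos, Finset.card_sdiff_of_subset hsub, hcard3 s hsK, Finset.card_pair hvw]
      norm_num
    obtain ⟨z, hz⟩ := hne
    obtain ⟨hzs, hz'⟩ := Finset.mem_sdiff.mp hz
    simp only [Finset.mem_insert, Finset.mem_singleton, not_or] at hz'
    have hvz : v ≠ z := fun e => hz'.1 e.symm
    have hwz : w ≠ z := fun e => hz'.2 e.symm
    refine ⟨z, hzs, hvz, hwz, ?_⟩
    apply (Finset.eq_of_subset_of_card_le ?_ ?_).symm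
    · intro a haa
      simp only [Finset.mem_insert, Finset.mem_singleton] at haa
      rcases haa with rfl | rfl | rfl <;> assumption
    · rw [hcard3 s hsK, Finset.card_insert_of_notMem (by simp [hvw, hvz]),
        Finset.card_insert_of_notMem (by simp [hwz]), Finset.card_singleton]
  obtain ⟨x, hxt, hvx, hwx, htvwx⟩ := third t ht hvt hwt
  -- the second triangle t' containing the edge {v, w}
  have h2vw := hedge2 {v, w} (hmemE t ht v hvt w hwt hvw)
  have htf : t ∈ K.filter (fun s => ({v, w} : Finset ℕ) ⊆ s) := by
    simp [ht, Finset.insert_subset_iff, hvt, hwt]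
  obtain ⟨t', ht'f, ht't, -⟩ := exists_other h2vw htf
  obtain ⟨ht'K, hvwt'⟩ := Finset.mem_filter.mp ht'f
  have hvt' : v ∈ t' := hvwt' (by simp)
  have hwt' : w ∈ t' := hvwt' (by simp)
  obtain ⟨y, hyt', hvy, hwy, ht'vwy⟩ := third t' ht'K hvt' hwt'
  have hxy : x ≠ y := by
    rintro rfl
    exact ht't (ht'vwy.trans htvwx.symm)
  have hxt' : x ∉ t' := by rw [ht'vwy]; simp [Ne.symm hvx, Ne.symm hwx, hxy]
  have hyt : y ∉ t := by rw [htvwx]; simp [Ne.symm hvy, Ne.symm hwy, Ne.symm hxy]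
  have htt' : t ≠ t' := Ne.symm ht't
  -- the star of v is {t, t', u}
  have hv3 : (K.filter (fun s => v ∈ s)).card = 3 := hv
  have htSv : t ∈ K.filter (fun s => v ∈ s) := by simp [ht, hvt]
  have ht'Sv : t' ∈ K.filter (fun s => v ∈ s) := by simp [ht'K, hvt']
  obtain ⟨u, huSv, hut, hut', hSveq⟩ := exists_third hv3 htSv ht'Sv htt'
  obtain ⟨huK, hvu⟩ := Finset.mem_filter.mp huSv
  have star_v : ∀ s ∈ K, v ∈ s → s = t ∨ s = t' ∨ s = u := by
    intro s hsK hvs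
    have hsf : s ∈ K.filter (fun s => v ∈ s) := by simp [hsK, hvs]
    rw [hSveq] at hsf
    simpa using hsf
  -- the star of w is {t, t', uw}
  have hw3 : (K.filter (fun s => w ∈ s)).card = 3 := hw
  have htSw : t ∈ K.filter (fun s => w ∈ s) := by simp [ht, hwt]
  have ht'Sw : t' ∈ K.filter (fun s => w ∈ s) := by simp [ht'K, hwt']
  obtain ⟨uw, huwSw, huwt, huwt', hSweq⟩ := exists_third hw3 htSw ht'Sw htt'
  obtain ⟨huwK, hwuw⟩ := Finset.mem_filter.mp huwSw
  have star_w : ∀ s ∈ K, w ∈ s → s = t ∨ s = t' ∨ s = uw := by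
    intro s hsK hws
    have hsf : s ∈ K.filter (fun s => w ∈ s) := by simp [hsK, hws]
    rw [hSweq] at hsf
    simpa using hsf
  -- x ∈ u via the edge {v, x}
  have hxu : x ∈ u := by
    have h2 := hedge2 {v, x} (hmemE t ht v hvt x hxt hvx)
    have htf2 : t ∈ K.filter (fun s => ({v, x} : Finset ℕ) ⊆ s) := by
      simp [ht, Finset.insert_subset_iff, hvt, hxt]
    obtain ⟨s, hsf, hst, -⟩ := exists_other h2 htf2
    obtain ⟨hsK, hsub⟩ := Finset.mem_filter.mp hsf
    rcases star_v s hsK (hsub (by simp)) with rfl | rfl | rfl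
    · exact absurd rfl hst
    · exact absurd (hsub (by simp)) hxt'
    · exact hsub (by simp)
  -- y ∈ u via the edge {v, y}
  have hyu : y ∈ u := by
    have h2 := hedge2 {v, y} (hmemE t' ht'K v hvt' y hyt' hvy)
    have htf2 : t' ∈ K.filter (fun s => ({v, y} : Finset ℕ) ⊆ s) := by
      simp [ht'K, Finset.insert_subset_iff, hvt', hyt']
    obtain ⟨s, hsf, hst', -⟩ := exists_other h2 htf2
    obtain ⟨hsK, hsub⟩ := Finset.mem_filter.mp hsf
    rcases star_v s hsK (hsub (by simp)) with rfl | rfl | rfl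
    · exact absurd (hsub (by simp)) hyt
    · exact absurd rfl hst'
    · exact hsub (by simp)
  -- x ∈ uw via the edge {w, x}
  have hxuw : x ∈ uw := by
    have h2 := hedge2 {w, x} (hmemE t ht w hwt x hxt hwx)
    have htf2 : t ∈ K.filter (fun s => ({w, x} : Finset ℕ) ⊆ s) := by
      simp [ht, Finset.insert_subset_iff, hwt, hxt]
    obtain ⟨s, hsf, hst, -⟩ := exists_other h2 htf2
    obtain ⟨hsK, hsub⟩ := Finset.mem_filter.mp hsf
    rcases star_w s hsK (hsub (by simp)) with rfl | rfl | rfl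
    · exact absurd rfl hst
    · exact absurd (hsub (by simp)) hxt'
    · exact hsub (by simp)
  -- y ∈ uw via the edge {w, y}
  have hyuw : y ∈ uw := by
    have h2 := hedge2 {w, y} (hmemE t' ht'K w hwt' y hyt' hwy)
    have htf2 : t' ∈ K.filter (fun s => ({w, y} : Finset ℕ) ⊆ s) := by
      simp [ht'K, Finset.insert_subset_iff, hwt', hyt']
    obtain ⟨s, hsf, hst', -⟩ := exists_other h2 htf2
    obtain ⟨hsK, hsub⟩ := Finset.mem_filter.mp hsf
    rcases star_w s hsK (hsub (by simp)) with rfl | rfl | rfl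
    · exact absurd (hsub (by simp)) hyt
    · exact absurd rfl hst'
    · exact hsub (by simp)
  have hueq : u = {v, x, y} := by
    apply (Finset.eq_of_subset_of_card_le ?_ ?_).symm
    · intro z hz
      simp only [Finset.mem_insert, Finset.mem_singleton] at hz
      rcases hz with rfl | rfl | rfl <;> assumption
    · rw [hcard3 u huK, Finset.card_insert_of_notMem (by simp [hvx, hvy]),
        Finset.card_insert_of_notMem (by simp [hxy]), Finset.card_singleton]
  have huweq : uw = {w, x, y} := by
    apply (Finset.eq_of_subset_of_card_le ?_ ?_).symm
    · intro z hz
      simp only [Finset.mem_insert, Finset.mem_singleton] at hz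
      rcases hz with rfl | rfl | rfl <;> assumption
    · rw [hcard3 uw huwK, Finset.card_insert_of_notMem (by simp [hwx, hwy]),
        Finset.card_insert_of_notMem (by simp [hxy]), Finset.card_singleton]
  have hvuw : v ∉ uw := by rw [huweq]; simp [hvw, hvx, hvy]
  have huwu : uw ≠ u := fun e => hvuw (e ▸ hvu)
  -- triangles containing the edge {x, y} are u and uw
  have hxyc : ∀ c ∈ K, x ∈ c → y ∈ c → c ∈ ({t, t', u, uw} : Finset (Finset ℕ)) := by
    intro c hcK hxc hyc
    have h2 := hedge2 {x, y} (hmemE u huK x hxu y hyu hxy)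
    have huf : u ∈ K.filter (fun s => ({x, y} : Finset ℕ) ⊆ s) := by
      simp [huK, Finset.insert_subset_iff, hxu, hyu]
    obtain ⟨s, hsf, hsu, hfeq⟩ := exists_other h2 huf
    have huwf : uw ∈ K.filter (fun s => ({x, y} : Finset ℕ) ⊆ s) := by
      simp [huwK, Finset.insert_subset_iff, hxuw, hyuw]
    have hcf : c ∈ K.filter (fun s => ({x, y} : Finset ℕ) ⊆ s) := by
      simp [hcK, Finset.insert_subset_iff, hxc, hyc]
    rw [hfeq] at huwf hcf
    simp only [Finset.mem_insert, Finset.mem_singleton] at huwf hcf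
    rcases huwf with he | he
    · exact absurd he huwu
    · subst he
      rcases hcf with rfl | rfl <;> simp
  -- K has exactly the four triangles t, t', u, uw
  have hKsub : ∀ c ∈ K, c ∈ ({t, t', u, uw} : Finset (Finset ℕ)) := by
    intro c hcK
    have hconn := hsurf.conn t ht c hcK
    clear hcK
    induction hconn with
    | refl => simp
    | @tail b c h1 h2 ih =>
      obtain ⟨hbK, hcK, hbc2⟩ := h2
      by_cases hvc : v ∈ c
      · have := star_v c hcK hvc
        simp only [Finset.mem_insert, Finset.mem_singleton]
        tauto
      by_cases hwc : w ∈ c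
      · have := star_w c hcK hwc
        simp only [Finset.mem_insert, Finset.mem_singleton]
        tauto
      simp only [Finset.mem_insert, Finset.mem_singleton] at ih
      rcases ih with rfl | rfl | rfl | rfl
      · exfalso
        have hss : b ∩ c ⊆ ({x} : Finset ℕ) := by
          intro z hz
          obtain ⟨hzt, hzc⟩ := Finset.mem_inter.mp hz
          rw [htvwx] at hzt
          simp only [Finset.mem_insert, Finset.mem_singleton] at hzt ⊢
          rcases hzt with rfl | rfl | rfl
          · exact absurd hzc hvc
          · exact absurd hzc hwc
          · rfl
        have := Finset.card_le_card hss
        rw [hbc2] at this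
        simp at this
      · exfalso
        have hss : b ∩ c ⊆ ({y} : Finset ℕ) := by
          intro z hz
          obtain ⟨hzt, hzc⟩ := Finset.mem_inter.mp hz
          rw [ht'vwy] at hzt
          simp only [Finset.mem_insert, Finset.mem_singleton] at hzt ⊢
          rcases hzt with rfl | rfl | rfl
          · exact absurd hzc hvc
          · exact absurd hzc hwc
          · rfl
        have := Finset.card_le_card hss
        rw [hbc2] at this
        simp at this
      · have hss : b ∩ c ⊆ ({x, y} : Finset ℕ) := by
          intro z hz
          obtain ⟨hzu, hzc⟩ := Finset.mem_inter.mp hz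
          rw [hueq] at hzu
          simp only [Finset.mem_insert, Finset.mem_singleton] at hzu ⊢
          rcases hzu with rfl | rfl | rfl
          · exact absurd hzc hvc
          · exact Or.inl rfl
          · exact Or.inr rfl
        have heq : b ∩ c = ({x, y} : Finset ℕ) :=
          Finset.eq_of_subset_of_card_le hss (by simp [hbc2, Finset.card_pair hxy])
        have hx' : x ∈ b ∩ c := by rw [heq]; simp
        have hy' : y ∈ b ∩ c := by rw [heq]; simp
        exact hxyc c hcK (Finset.mem_inter.mp hx').2 (Finset.mem_inter.mp hy').2
      · have hss : b ∩ c ⊆ ({x, y} : Finset ℕ) := by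
          intro z hz
          obtain ⟨hzu, hzc⟩ := Finset.mem_inter.mp hz
          rw [huweq] at hzu
          simp only [Finset.mem_insert, Finset.mem_singleton] at hzu ⊢
          rcases hzu with rfl | rfl | rfl
          · exact absurd hzc hwc
          · exact Or.inl rfl
          · exact Or.inr rfl
        have heq : b ∩ c = ({x, y} : Finset ℕ) :=
          Finset.eq_of_subset_of_card_le hss (by simp [hbc2, Finset.card_pair hxy])
        have hx' : x ∈ b ∩ c := by rw [heq]; simp
        have hy' : y ∈ b ∩ c := by rw [heq]; simp
        exact hxyc c hcK (Finset.mem_inter.mp hx').2 (Finset.mem_inter.mp hy').2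
  have hKeq : K = ({t, t', u, uw} : Finset (Finset ℕ)) := by
    apply Finset.Subset.antisymm
    · intro c hc
      exact hKsub c hc
    · intro c hc
      simp only [Finset.mem_insert, Finset.mem_singleton] at hc
      rcases hc with rfl | rfl | rfl | rfl <;> assumption
  -- build the isomorphism
  let f : ℕ → ℕ := fun n => if n = v then 1 else if n = w then 2 else if n = x then 3 else 4
  have fv : f v = 1 := by simp [f]
  have fw : f w = 2 := by simp [f, Ne.symm hvw]
  have fx : f x = 3 := by simp [f, Ne.symm hvx, Ne.symm hwx]
  have fy : f y = 4 := by simp [f, Ne.symm hvy, Ne.symm hwy, Ne.symm hxy]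
  have hvert : ∀ a ∈ vertices K, a = v ∨ a = w ∨ a = x ∨ a = y := by
    intro a ha
    simp only [vertices, Finset.mem_biUnion, id] at ha
    obtain ⟨s, hsK, has⟩ := ha
    have hsT := hKsub s hsK
    simp only [Finset.mem_insert, Finset.mem_singleton] at hsT
    rcases hsT with rfl | rfl | rfl | rfl
    · rw [htvwx] at has
      simp only [Finset.mem_insert, Finset.mem_singleton] at has
      exact has.imp id (Or.imp id Or.inl)
    · rw [ht'vwy] at has
      simp only [Finset.mem_insert, Finset.mem_singleton] at has
      exact has.imp id (Or.imp id Or.inr)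
    · rw [hueq] at has
      simp only [Finset.mem_insert, Finset.mem_singleton] at has
      exact has.imp id Or.inr
    · rw [huweq] at has
      simp only [Finset.mem_insert, Finset.mem_singleton] at has
      exact Or.inr has
  refine ⟨f, ?_, ?_⟩
  · intro a ha b hb hab
    rcases hvert a ha with rfl | rfl | rfl | rfl <;>
      rcases hvert b hb with rfl | rfl | rfl | rfl <;>
      simp only [fv, fw, fx, fy] at hab <;> omega
  · rw [hKeq, htvwx, ht'vwy, hueq, huweq]
    simp only [Finset.image_insert, Finset.image_singleton, fv, fw, fx, fy]
    rfl

end Tri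
end

section
/- The boundary of the tetrahedron is the only root possessing a 3-valent vertex. -/
namespace Tri

set_option maxHeartbeats 3200000 in
/-- the tetrahedron boundary is the only root with a
3-valent vertex. -/
theorem root_with_three_valent_is_tetra (K : Complex) (h : IsRoot K)
    (hv : ∃ v ∈ vertices K, valence K v = 3) : Iso K tetra := by
  obtain ⟨v, hvK, hval⟩ := hv
  obtain ⟨⟨hs, hE2⟩, hroot⟩ := h
  have hL : linkV K v ∈ K := by
    by_contra hnL
    exact hroot (invT K v) ⟨v, hval, hnL, rfl⟩
  set S : Complex := K.filter (fun t => v ∈ t) with hSdef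
  have hS3 : S.card = 3 := hval
  set L : Finset ℕ := linkV K v with hLdef
  have hLcard : L.card = 3 := hs.card3 _ hL
  have hvL : v ∉ L := by rw [hLdef]; exact Finset.notMem_erase v _
  have hmemS : ∀ t ∈ S, t ∈ K ∧ v ∈ t := by
    intro t ht; simpa [hSdef] using Finset.mem_filter.mp ht
  have herase : ∀ t ∈ S, insert v (t.erase v) = t := by
    intro t ht
    exact Finset.insert_erase (hmemS t ht).2
  have hercard : ∀ t ∈ S, (t.erase v).card = 2 := by
    intro t ht
    rw [Finset.card_erase_of_mem (hmemS t ht).2, hs.card3 t (hmemS t ht).1]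
  have hsubL : ∀ t ∈ S, t.erase v ⊆ L := by
    intro t ht x hx
    rw [Finset.mem_erase] at hx
    rw [hLdef]
    exact Finset.mem_erase.mpr ⟨hx.1, Finset.mem_biUnion.mpr ⟨t, ht, hx.2⟩⟩
  have hinj : Set.InjOn (fun t : Finset ℕ => t.erase v) (S : Set (Finset ℕ)) := by
    intro t1 h1 t2 h2 he
    rw [← herase t1 h1, ← herase t2 h2]
    simp only at he
    rw [he]
  have himg : S.image (fun t => t.erase v) = L.powersetCard 2 := by
    apply Finset.eq_of_subset_of_card_le
    · intro p hp
      obtain ⟨t, ht, rfl⟩ := Finset.mem_image.mp hp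
      exact Finset.mem_powersetCard.mpr ⟨hsubL t ht, hercard t ht⟩
    · rw [Finset.card_powersetCard, hLcard, Finset.card_image_of_injOn hinj, hS3]
      norm_num
  have hpair : ∀ p ∈ L.powersetCard 2, insert v p ∈ S := by
    intro p hp
    rw [← himg] at hp
    obtain ⟨t, ht, rfl⟩ := Finset.mem_image.mp hp
    rw [herase t ht]
    exact ht
  have hstep : ∀ t1 ∈ insert L S, ∀ t2, adj K t1 t2 → t2 ∈ insert L S := by
    intro t1 ht1 t2 hadj
    obtain ⟨h1K, h2K, hcap⟩ := hadj
    have he1 : t1 ∩ t2 ⊆ t1 := Finset.inter_subset_left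
    have he2 : t1 ∩ t2 ⊆ t2 := Finset.inter_subset_right
    have heK : t1 ∩ t2 ∈ edges K :=
      Finset.mem_biUnion.mpr ⟨t1, h1K, Finset.mem_powersetCard.mpr ⟨he1, hcap⟩⟩
    have hfe : (K.filter (fun t => t1 ∩ t2 ⊆ t)).card = 2 := hE2 _ heK
    rcases Finset.mem_insert.mp ht1 with h1L | h1S
    · have hpe : t1 ∩ t2 ∈ L.powersetCard 2 :=
        Finset.mem_powersetCard.mpr ⟨by rw [← h1L]; exact he1, hcap⟩
      have htS : insert v (t1 ∩ t2) ∈ S := hpair _ hpe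
      have hneq : t1 ≠ insert v (t1 ∩ t2) := by
        intro hh
        apply hvL
        rw [← h1L, hh]
        exact Finset.mem_insert_self v _
      have hsub2 : ({t1, insert v (t1 ∩ t2)} : Finset (Finset ℕ)) ⊆
          K.filter (fun t => t1 ∩ t2 ⊆ t) := by
        intro x hx
        rcases Finset.mem_insert.mp hx with rfl | hx
        · exact Finset.mem_filter.mpr ⟨h1K, he1⟩
        · rw [Finset.mem_singleton] at hx
          subst hx
          exact Finset.mem_filter.mpr ⟨(hmemS _ htS).1, Finset.subset_insert v _⟩
      have hfeq : ({t1, insert v (t1 ∩ t2)} : Finset (Finset ℕ)) =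
          K.filter (fun t => t1 ∩ t2 ⊆ t) := by
        apply Finset.eq_of_subset_of_card_le hsub2
        rw [hfe, Finset.card_insert_of_notMem (by simpa using hneq), Finset.card_singleton]
      have ht2 : t2 ∈ ({t1, insert v (t1 ∩ t2)} : Finset (Finset ℕ)) := by
        rw [hfeq]; exact Finset.mem_filter.mpr ⟨h2K, he2⟩
      rcases Finset.mem_insert.mp ht2 with rfl | ht2
      · rw [h1L]
        exact Finset.mem_insert_self _ _
      · rw [Finset.mem_singleton] at ht2
        rw [ht2]
        exact Finset.mem_insert_of_mem htS
    · by_cases hve : v ∈ t1 ∩ t2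
      · exact Finset.mem_insert_of_mem
          (Finset.mem_filter.mpr ⟨h2K, he2 hve⟩)
      · have hee : t1 ∩ t2 = t1.erase v := by
          apply Finset.eq_of_subset_of_card_le
          · intro x hx
            exact Finset.mem_erase.mpr ⟨fun hh => hve (hh ▸ hx), he1 hx⟩
          · rw [hercard t1 h1S, hcap]
        have hneq : t1 ≠ L := fun hh => hvL (hh ▸ (hmemS t1 h1S).2)
        have hsub2 : ({t1, L} : Finset (Finset ℕ)) ⊆ K.filter (fun t => t1 ∩ t2 ⊆ t) := by
          intro x hx
          rcases Finset.mem_insert.mp hx with rfl | hx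
          · exact Finset.mem_filter.mpr ⟨h1K, he1⟩
          · rw [Finset.mem_singleton] at hx
            subst hx
            exact Finset.mem_filter.mpr ⟨hL, by rw [hee]; exact hsubL t1 h1S⟩
        have hfeq : ({t1, L} : Finset (Finset ℕ)) = K.filter (fun t => t1 ∩ t2 ⊆ t) := by
          apply Finset.eq_of_subset_of_card_le hsub2
          rw [hfe, Finset.card_insert_of_notMem (by simpa using hneq), Finset.card_singleton]
        have ht2 : t2 ∈ ({t1, L} : Finset (Finset ℕ)) := by
          rw [hfeq]; exact Finset.mem_filter.mpr ⟨h2K, he2⟩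
        rcases Finset.mem_insert.mp ht2 with rfl | ht2
        · exact Finset.mem_insert_of_mem h1S
        · rw [Finset.mem_singleton] at ht2
          subst ht2
          exact Finset.mem_insert_self _ _
  have hKeq : K = insert L S := by
    apply Finset.Subset.antisymm
    · intro t ht
      have hrt := hs.conn L hL t ht
      clear ht
      induction hrt with
      | refl => exact Finset.mem_insert_self _ _
      | tail _ hadj ih => exact hstep _ ih _ hadj
    · intro t ht
      rcases Finset.mem_insert.mp ht with rfl | htS
      · exact hL
      · exact (hmemS t htS).1
  obtain ⟨a, b, c, hab, hac, hbc, hLabc⟩ := Finset.card_eq_three.mp hLcard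
  have haL : a ∈ L := by rw [hLabc]; simp
  have hbL : b ∈ L := by rw [hLabc]; simp
  have hcL : c ∈ L := by rw [hLabc]; simp
  have hav : a ≠ v := fun hh => hvL (hh ▸ haL)
  have hbv : b ≠ v := fun hh => hvL (hh ▸ hbL)
  have hcv : c ≠ v := fun hh => hvL (hh ▸ hcL)
  have hpab : ({a, b} : Finset ℕ) ∈ L.powersetCard 2 := by
    refine Finset.mem_powersetCard.mpr ⟨?_, Finset.card_pair hab⟩
    intro z hz
    rcases Finset.mem_insert.mp hz with rfl | hz
    · exact haL
    · exact (Finset.mem_singleton.mp hz) ▸ hbL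
  have hpac : ({a, c} : Finset ℕ) ∈ L.powersetCard 2 := by
    refine Finset.mem_powersetCard.mpr ⟨?_, Finset.card_pair hac⟩
    intro z hz
    rcases Finset.mem_insert.mp hz with rfl | hz
    · exact haL
    · exact (Finset.mem_singleton.mp hz) ▸ hcL
  have hpbc : ({b, c} : Finset ℕ) ∈ L.powersetCard 2 := by
    refine Finset.mem_powersetCard.mpr ⟨?_, Finset.card_pair hbc⟩
    intro z hz
    rcases Finset.mem_insert.mp hz with rfl | hz
    · exact hbL
    · exact (Finset.mem_singleton.mp hz) ▸ hcL
  have htab : insert v ({a, b} : Finset ℕ) ∈ S := hpair _ hpab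
  have htac : insert v ({a, c} : Finset ℕ) ∈ S := hpair _ hpac
  have htbc : insert v ({b, c} : Finset ℕ) ∈ S := hpair _ hpbc
  have hne1 : insert v ({a, b} : Finset ℕ) ≠ insert v ({a, c} : Finset ℕ) := by
    intro hh
    have : b ∈ insert v ({a, c} : Finset ℕ) := hh ▸ (by simp)
    simp only [Finset.mem_insert, Finset.mem_singleton] at this
    rcases this with h | h | h
    · exact hbv h
    · exact hab h.symm
    · exact hbc h
  have hne2 : insert v ({a, b} : Finset ℕ) ≠ insert v ({b, c} : Finset ℕ) := by
    intro hh
    have : a ∈ insert v ({b, c} : Finset ℕ) := hh ▸ (by simp)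
    simp only [Finset.mem_insert, Finset.mem_singleton] at this
    rcases this with h | h | h
    · exact hav h
    · exact hab h
    · exact hac h
  have hne3 : insert v ({a, c} : Finset ℕ) ≠ insert v ({b, c} : Finset ℕ) := by
    intro hh
    have : a ∈ insert v ({b, c} : Finset ℕ) := hh ▸ (by simp)
    simp only [Finset.mem_insert, Finset.mem_singleton] at this
    rcases this with h | h | h
    · exact hav h
    · exact hab h
    · exact hac h
  have hSeq : ({insert v ({a, b} : Finset ℕ), insert v ({a, c} : Finset ℕ),
      insert v ({b, c} : Finset ℕ)} : Finset (Finset ℕ)) = S := by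
    apply Finset.eq_of_subset_of_card_le
    · intro x hx
      rcases Finset.mem_insert.mp hx with rfl | hx
      · exact htab
      rcases Finset.mem_insert.mp hx with rfl | hx
      · exact htac
      · exact (Finset.mem_singleton.mp hx) ▸ htbc
    · rw [hS3, Finset.card_insert_of_notMem (by simp [hne1, hne2]),
        Finset.card_insert_of_notMem (by simp [hne3]), Finset.card_singleton]
  have hKexp : K = ({({a, b, c} : Finset ℕ), insert v ({a, b} : Finset ℕ),
      insert v ({a, c} : Finset ℕ), insert v ({b, c} : Finset ℕ)} : Finset (Finset ℕ)) := by
    rw [hKeq, ← hSeq, hLabc]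
  have hvert : ∀ x ∈ vertices K, x = v ∨ x = a ∨ x = b ∨ x = c := by
    intro x hx
    obtain ⟨t, htK, hxt⟩ := Finset.mem_biUnion.mp hx
    rw [hKexp] at htK
    simp only [Finset.mem_insert, Finset.mem_singleton] at htK
    rcases htK with rfl | rfl | rfl | rfl <;>
      simp only [id_eq, Finset.mem_insert, Finset.mem_singleton] at hxt <;> tauto
  set f : ℕ → ℕ := fun x => if x = v then 1 else if x = a then 2 else
    if x = b then 3 else if x = c then 4 else 0 with hf
  have hfv : f v = 1 := by simp [hf]
  have hfa : f a = 2 := by simp [hf, hav]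
  have hfb : f b = 3 := by simp [hf, hbv, Ne.symm hab]
  have hfc : f c = 4 := by simp [hf, hcv, Ne.symm hac, Ne.symm hbc]
  refine ⟨f, ?_, ?_⟩
  · intro x hx y hy hxy
    have hx' := hvert x hx
    have hy' := hvert y hy
    rcases hx' with rfl | rfl | rfl | rfl <;> rcases hy' with rfl | rfl | rfl | rfl <;>
      simp only [hfv, hfa, hfb, hfc] at hxy <;> first | rfl | omega
  · rw [hKexp]
    simp only [Finset.image_insert, Finset.image_singleton, hfv, hfa, hfb, hfc]
    decide


end Tri
end
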